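/- arXiv:1612.02845 — 2 statements merged into one kernel-verified Lean document; each statement's English description precedes it below -/
import Mathlib

section
/- Fix integers a, b ≥ 0. For n ≥ 1 let H_{a,b}(n) be the set of M ∈ GL₂(ℤ/ℓⁿℤ) such that: M ≡ I (mod ℓ^{min(a,n)}); if n > a then M ≢ I (mod ℓ^{a+1}); if a < n ≤ a + b then every matrix M̃ ∈ Mat₂(ℤ_ℓ) reducing to M modulo ℓⁿ satisfies v_ℓ(det(M̃ − I)) ≥ a + n; and if n > a + b then every such lift M̃ satisfies v_ℓ(det(M̃ − I)) = 2a + b. Then for every n ≥ 1 and every M ∈ H_{a,b}(n), the number of M' ∈ H_{a,b}(n+1) reducing to M modulo ℓⁿ equals f(n), where f(n) = 1 if n < a; f(n) = (ℓ² − 1)(ℓ² − ℓ) if n = a and b = 0; f(n) = (ℓ + 1)(ℓ² − 1) if n = a and b > 0; f(n) = ℓ³ if a < n < a + b; f(n) = ℓ⁴ − ℓ³ if n = a + b and b > 0; and f(n) = ℓ⁴ if n > a + b. -/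
open Matrix Polynomial

/-- Reduction modulo `p^n` on `GL₂(ℤ_p)`. -/
noncomputable def redGL (p : ℕ) [Fact p.Prime] (n : ℕ) :
    GL (Fin 2) ℤ_[p] →* GL (Fin 2) (ZMod (p ^ n)) :=
  Matrix.GeneralLinearGroup.map (PadicInt.toZModPow n)

/-- `M ≡ I (mod p^k)`. -/
def modI {p : ℕ} [Fact p.Prime] (k : ℕ) (M : GL (Fin 2) ℤ_[p]) : Prop :=
  ∀ i j, ((p : ℤ_[p]) ^ k) ∣ (((M : Matrix (Fin 2) (Fin 2) ℤ_[p]) - 1) i j)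

/-- `v_p x = k`, expressed through divisibility (in particular `x ≠ 0`). -/
def valEq {p : ℕ} [Fact p.Prime] (x : ℤ_[p]) (k : ℕ) : Prop :=
  ((p : ℤ_[p]) ^ k ∣ x) ∧ ¬ ((p : ℤ_[p]) ^ (k + 1) ∣ x)

/-- Condition `E(a,b)`. -/
def CondE {p : ℕ} [Fact p.Prime] (a b : ℕ) (M : GL (Fin 2) ℤ_[p]) : Prop :=
  modI a M ∧ ¬ modI (a + 1) M ∧
    valEq (((M : Matrix (Fin 2) (Fin 2) ℤ_[p]) - 1).det) (2 * a + b)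

/-- `𝓜_{a,b}(G)`. -/
def Mset {p : ℕ} [Fact p.Prime] (G : Subgroup (GL (Fin 2) ℤ_[p])) (a b : ℕ) :
    Set (GL (Fin 2) ℤ_[p]) :=
  {M | M ∈ G ∧ CondE a b M}

/-- `μ_{a,b}(G)`. -/
noncomputable def mu (p : ℕ) [Fact p.Prime] (G : Subgroup (GL (Fin 2) ℤ_[p])) (a b : ℕ) : ℚ :=
  ((redGL p (a + b + 1) '' Mset G a b).ncard : ℚ) /
    ((redGL p (a + b + 1) '' (G : Set (GL (Fin 2) ℤ_[p]))).ncard : ℚ)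

/-- `G` is open in `GL₂(ℤ_p)`. -/
def IsOpenSub {p : ℕ} [Fact p.Prime] (G : Subgroup (GL (Fin 2) ℤ_[p])) : Prop :=
  ∃ m : ℕ, 1 ≤ m ∧ ∀ M : GL (Fin 2) ℤ_[p], modI m M → M ∈ G

/-- The underlying set of the Cartan subgroup `C(c,d)`. -/
def CartanSet {p : ℕ} [Fact p.Prime] (c d : ℤ_[p]) : Set (GL (Fin 2) ℤ_[p]) :=
  {M | ∃ x y : ℤ_[p], (M : Matrix (Fin 2) (Fin 2) ℤ_[p]) = !![x, d * y; y, x + c * y]}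

/-- `C` is the Cartan subgroup with parameters `(c,d)`. -/
def IsCartan {p : ℕ} [Fact p.Prime] (c d : ℤ_[p]) (C : Subgroup (GL (Fin 2) ℤ_[p])) : Prop :=
  (C : Set (GL (Fin 2) ℤ_[p])) = CartanSet c d

/-- `(c,d)` are normalized parameters. -/
def NormalizedParams (p : ℕ) [Fact p.Prime] (c d : ℤ_[p]) : Prop :=
  (c = 0 ∧ d ≠ 0) ∨ (p = 2 ∧ c = 1 ∧ (d = 0 ∨ IsUnit d))

/-- `(c,d)` are parameters of a split Cartan subgroup. -/
def SplitParams (p : ℕ) [Fact p.Prime] (c d : ℤ_[p]) : Prop :=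
  (Odd p ∧ c = 0 ∧ ∃ u : ℤ_[p], IsUnit u ∧ d = u ^ 2) ∨ (p = 2 ∧ c = 1 ∧ d = 0)

/-- `(c,d)` are parameters of a nonsplit Cartan subgroup. -/
def NonsplitParams (p : ℕ) [Fact p.Prime] (c d : ℤ_[p]) : Prop :=
  (Odd p ∧ c = 0 ∧ IsUnit d ∧ ¬ IsSquare d) ∨ (p = 2 ∧ c = 1 ∧ IsUnit d)

/-- Reduction `GL₂(ℤ/p^{n+1}) → GL₂(ℤ/p^n)`. -/
noncomputable def castGL (p : ℕ) [Fact p.Prime] (n : ℕ) :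
    GL (Fin 2) (ZMod (p ^ (n + 1))) →* GL (Fin 2) (ZMod (p ^ n)) :=
  Matrix.GeneralLinearGroup.map (ZMod.castHom (pow_dvd_pow p (Nat.le_succ n)) (ZMod (p ^ n)))
/-- The set `H_{a,b}(n) ⊆ GL₂(ℤ/ℓⁿℤ)`. -/
def Hset (p : ℕ) [Fact p.Prime] (a b n : ℕ) : Set (GL (Fin 2) (ZMod (p ^ n))) :=
  {M | (∀ i j, ((p : ZMod (p ^ n)) ^ min a n) ∣
          ((M : Matrix (Fin 2) (Fin 2) (ZMod (p ^ n))) - 1) i j)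
    ∧ (a < n → ¬ ∀ i j, ((p : ZMod (p ^ n)) ^ (a + 1)) ∣
          ((M : Matrix (Fin 2) (Fin 2) (ZMod (p ^ n))) - 1) i j)
    ∧ (a < n → n ≤ a + b → ∀ Mt : Matrix (Fin 2) (Fin 2) ℤ_[p],
        Mt.map (PadicInt.toZModPow n) = (M : Matrix (Fin 2) (Fin 2) (ZMod (p ^ n))) →
        (p : ℤ_[p]) ^ (a + n) ∣ (Mt - 1).det)
    ∧ (a + b < n → ∀ Mt : Matrix (Fin 2) (Fin 2) ℤ_[p],
        Mt.map (PadicInt.toZModPow n) = (M : Matrix (Fin 2) (Fin 2) (ZMod (p ^ n))) →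
        valEq (Mt - 1).det (2 * a + b))}

/-- The number `f(n)` of lifts. -/
def liftCount (p a b n : ℕ) : ℕ :=
  if n < a then 1
  else if n = a then (if b = 0 then (p ^ 2 - 1) * (p ^ 2 - p) else (p + 1) * (p ^ 2 - 1))
  else if n < a + b then p ^ 3
  else if n = a + b then p ^ 4 - p ^ 3
  else p ^ 4


section Cross
variable {R S : Type*} [CommRing R] [CommRing S]

/-- cross term in det(A+B) for 2x2 matrices -/
def cross (A B : Matrix (Fin 2) (Fin 2) R) : R :=
  A 0 0 * B 1 1 + A 1 1 * B 0 0 - A 0 1 * B 1 0 - A 1 0 * B 0 1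

lemma det_add_fin_two (A B : Matrix (Fin 2) (Fin 2) R) :
    (A + B).det = A.det + cross A B + B.det := by
  simp [Matrix.det_fin_two, cross]; ring

lemma cross_add_right (A B C : Matrix (Fin 2) (Fin 2) R) :
    cross A (B + C) = cross A B + cross A C := by
  simp [cross]; ring

lemma cross_smul_right (c : R) (A B : Matrix (Fin 2) (Fin 2) R) :
    cross A (c • B) = c * cross A B := by
  simp [cross]; ring

lemma cross_map (f : R →+* S) (A B : Matrix (Fin 2) (Fin 2) R) :
    f (cross A B) = cross (A.map f) (B.map f) := by
  simp [cross, Matrix.map_apply]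

lemma dvd_cross_left {d : R} {A : Matrix (Fin 2) (Fin 2) R} (h : ∀ i j, d ∣ A i j)
    (B : Matrix (Fin 2) (Fin 2) R) : d ∣ cross A B := by
  unfold cross
  exact dvd_sub (dvd_sub (dvd_add ((h 0 0).mul_right _) ((h 1 1).mul_right _))
    ((h 0 1).mul_right _)) ((h 1 0).mul_right _)

lemma det_smul_add_fin_two (c : R) (A B : Matrix (Fin 2) (Fin 2) R) :
    (A + c • B).det = A.det + c * cross A B + c ^ 2 * B.det := by
  rw [det_add_fin_two, cross_smul_right, Matrix.det_smul, Fintype.card_fin]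

end Cross

section Padic
variable {p : ℕ} [hp : Fact p.Prime]

lemma toZModPow_eq_zero_iff (m : ℕ) (x : ℤ_[p]) :
    PadicInt.toZModPow m x = 0 ↔ (p : ℤ_[p]) ^ m ∣ x := by
  rw [← RingHom.mem_ker, PadicInt.ker_toZModPow, Ideal.mem_span_singleton]

lemma toZModPow_natCast_val (m : ℕ) (s : ZMod (p ^ m)) :
    PadicInt.toZModPow m ((s.val : ℤ_[p])) = s := by
  haveI : NeZero (p ^ m) := ⟨pow_ne_zero m hp.out.ne_zero⟩
  rw [map_natCast, ZMod.natCast_zmod_val]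

lemma toZModPow_surj (m : ℕ) : Function.Surjective (PadicInt.toZModPow m : ℤ_[p] → ZMod (p ^ m)) :=
  fun s => ⟨(s.val : ℤ_[p]), toZModPow_natCast_val m s⟩

lemma zmod_dvd_transfer {k m : ℕ} (hk : k ≤ m) (x : ℤ_[p]) :
    ((p : ZMod (p ^ m)) ^ k ∣ PadicInt.toZModPow m x) ↔ (p : ℤ_[p]) ^ k ∣ x := by
  constructor
  · rintro ⟨y, hy⟩
    obtain ⟨Y, rfl⟩ := toZModPow_surj m y
    have : (p : ℤ_[p]) ^ m ∣ x - (p : ℤ_[p]) ^ k * Y := by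
      rw [← toZModPow_eq_zero_iff]
      simp [hy]
    obtain ⟨z, hz⟩ := this
    refine ⟨Y + (p : ℤ_[p]) ^ (m - k) * z, ?_⟩
    have : x = (p : ℤ_[p]) ^ k * Y + (p : ℤ_[p]) ^ m * z := by linear_combination hz
    rw [this]
    have hpk : (p : ℤ_[p]) ^ k * (p : ℤ_[p]) ^ (m - k) = (p : ℤ_[p]) ^ m := by
      rw [← pow_add, Nat.add_sub_cancel' hk]
    linear_combination (-z) * hpk
  · rintro ⟨y, rfl⟩
    exact ⟨PadicInt.toZModPow m y, by push_cast [_root_.map_mul, map_pow]; norm_num⟩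

lemma dvd_val_sub_iff (b₁ b₂ : ZMod (p ^ 1)) :
    (p : ℤ_[p]) ∣ ((b₁.val : ℤ_[p]) - (b₂.val : ℤ_[p])) ↔ b₁ = b₂ := by
  constructor
  · intro h
    have h1 : PadicInt.toZModPow 1 ((b₁.val : ℤ_[p]) - (b₂.val : ℤ_[p])) = 0 := by
      rw [toZModPow_eq_zero_iff, pow_one]; exact h
    rw [map_sub, toZModPow_natCast_val, toZModPow_natCast_val, sub_eq_zero] at h1
    exact h1
  · rintro rfl; simp

lemma valEq_of_dvd_sub {x y : ℤ_[p]} {k : ℕ} (h : valEq x k)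
    (hd : (p : ℤ_[p]) ^ (k + 1) ∣ y - x) : valEq y k := by
  obtain ⟨h1, h2⟩ := h
  constructor
  · have : (p : ℤ_[p]) ^ k ∣ y - x := dvd_trans (pow_dvd_pow _ (Nat.le_succ k)) hd
    simpa using dvd_add this h1
  · intro hy
    exact h2 (by simpa using dvd_sub hy hd)
section Counting
variable {K : Type*} [Field K] [Fintype K] [DecidableEq K]

omit [Field K] [DecidableEq K] in
lemma card_matrix_two : Nat.card (Matrix (Fin 2) (Fin 2) K) = Fintype.card K ^ 4 := by
  rw [Nat.card_congr (Matrix.of (m := Fin 2) (n := Fin 2) (α := K)).symm,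
    Nat.card_eq_fintype_card, Fintype.card_fun, Fintype.card_fun, Fintype.card_fin]
  ring

lemma count_linear_fiber (f : Matrix (Fin 2) (Fin 2) K →ₗ[K] K) (hf : f ≠ 0) (r : K) :
    {B : Matrix (Fin 2) (Fin 2) K | f B = r}.ncard = Fintype.card K ^ 3 := by
  have hm : ∃ m₀, f m₀ ≠ 0 := by
    by_contra h
    push_neg at h
    exact hf (LinearMap.ext fun x => by simpa using h x)
  obtain ⟨m₀, hm₀⟩ := hm
  set m : Matrix (Fin 2) (Fin 2) K := (f m₀)⁻¹ • m₀ with hmdef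
  have hfm : f m = 1 := by
    rw [hmdef, LinearMap.map_smul, smul_eq_mul, inv_mul_cancel₀ hm₀]
  -- equivalence with {f = 0} × K
  have e : Matrix (Fin 2) (Fin 2) K ≃ {B : Matrix (Fin 2) (Fin 2) K | f B = 0} × K :=
    { toFun := fun B => (⟨B - f B • m, by simp [hfm]⟩, f B)
      invFun := fun x => x.1.1 + x.2 • m
      left_inv := fun B => by simp
      right_inv := fun x => by
        have h1 : f (x.1.1 + x.2 • m) = x.2 := by
          have := x.1.2
          simp only [Set.mem_setOf_eq] at this
          simp [this, hfm]
        ext : 1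
        · simp only [Set.mem_setOf_eq, h1]
          simp
        · simp [h1] }
  have e2 : {B : Matrix (Fin 2) (Fin 2) K | f B = r} ≃ {B : Matrix (Fin 2) (Fin 2) K | f B = 0} :=
    { toFun := fun B => ⟨B.1 - r • m, by
        have := B.2; simp only [Set.mem_setOf_eq] at this ⊢; simp [this, hfm]⟩
      invFun := fun B => ⟨B.1 + r • m, by
        have := B.2; simp only [Set.mem_setOf_eq] at this ⊢; simp [this, hfm]⟩
      left_inv := fun B => by ext : 1; simp
      right_inv := fun B => by ext : 1; simp }
  have hcard : Nat.card (Matrix (Fin 2) (Fin 2) K) =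
      Nat.card {B : Matrix (Fin 2) (Fin 2) K | f B = 0} * Fintype.card K := by
    rw [Nat.card_congr e, Nat.card_prod, Nat.card_eq_fintype_card, Nat.card_eq_fintype_card]
  rw [card_matrix_two] at hcard
  have hq : 0 < Fintype.card K := Fintype.card_pos
  have : Nat.card {B : Matrix (Fin 2) (Fin 2) K | f B = 0} = Fintype.card K ^ 3 := by
    have h4 : Fintype.card K ^ 4 = Fintype.card K ^ 3 * Fintype.card K := by ring
    rw [h4] at hcard
    exact Nat.eq_of_mul_eq_mul_right hq hcard.symm
  rw [← Nat.card_coe_set_eq, Nat.card_congr e2, this]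

lemma count_linear_fiber_compl (f : Matrix (Fin 2) (Fin 2) K →ₗ[K] K) (hf : f ≠ 0) (r : K) :
    {B : Matrix (Fin 2) (Fin 2) K | f B ≠ r}.ncard =
      Fintype.card K ^ 4 - Fintype.card K ^ 3 := by
  have h := Set.ncard_add_ncard_compl {B : Matrix (Fin 2) (Fin 2) K | f B = r}
    (Set.toFinite _) (Set.toFinite _)
  rw [count_linear_fiber f hf r, card_matrix_two] at h
  have : {B : Matrix (Fin 2) (Fin 2) K | f B ≠ r} =
      {B : Matrix (Fin 2) (Fin 2) K | f B = r}ᶜ := by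
    ext B; simp
  rw [this]
  omega

lemma count_univ_matrix :
    (Set.univ : Set (Matrix (Fin 2) (Fin 2) K)).ncard = Fintype.card K ^ 4 := by
  rw [Set.ncard_univ, card_matrix_two]

lemma count_det_ne_zero :
    {B : Matrix (Fin 2) (Fin 2) K | B.det ≠ 0}.ncard =
      (Fintype.card K ^ 2 - 1) * (Fintype.card K ^ 2 - Fintype.card K) := by
  classical
  have e : GL (Fin 2) K ≃ {B : Matrix (Fin 2) (Fin 2) K | B.det ≠ 0} :=
    { toFun := fun U => ⟨(U : Matrix (Fin 2) (Fin 2) K), by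
        have : IsUnit (U : Matrix (Fin 2) (Fin 2) K).det := by
          exact Matrix.GeneralLinearGroup.val_det_apply U ▸ (Matrix.GeneralLinearGroup.det U).isUnit
        simpa [isUnit_iff_ne_zero] using this⟩
      invFun := fun B => Matrix.GeneralLinearGroup.mk'' B.1 (isUnit_iff_ne_zero.mpr B.2)
      left_inv := fun U => by
        apply Units.ext
        simp only [Matrix.GeneralLinearGroup.mk'']
        rfl
      right_inv := fun B => by
        ext : 1
        simp only [Matrix.GeneralLinearGroup.mk'']
        rfl }
  rw [← Nat.card_coe_set_eq, ← Nat.card_congr e, Matrix.card_GL_field]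
  rw [Fin.prod_univ_two]
  simp

/-- `cross c ·` as a linear map. -/
def crossLin (c : Matrix (Fin 2) (Fin 2) K) : Matrix (Fin 2) (Fin 2) K →ₗ[K] K where
  toFun := cross c
  map_add' := cross_add_right c
  map_smul' := fun t B => by simpa using cross_smul_right t c B

omit [Fintype K] [DecidableEq K] in
lemma crossLin_ne_zero {c : Matrix (Fin 2) (Fin 2) K} (hc : c ≠ 0) : crossLin c ≠ 0 := by
  intro h0
  have hB : ∀ B, cross c B = 0 := fun B => by
    have : crossLin c B = (0 : Matrix (Fin 2) (Fin 2) K →ₗ[K] K) B := by rw [h0]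
    simpa [crossLin] using this
  have h1 := hB !![1, 0; 0, 0]
  have h2 := hB !![0, 1; 0, 0]
  have h3 := hB !![0, 0; 1, 0]
  have h4 := hB !![0, 0; 0, 1]
  simp [cross] at h1 h2 h3 h4
  apply hc
  ext i j
  fin_cases i <;> fin_cases j <;> simp [h1, h2, h3, h4]

lemma count_cross_eq {c : Matrix (Fin 2) (Fin 2) K} (hc : c ≠ 0) (r : K) :
    {B : Matrix (Fin 2) (Fin 2) K | cross c B = r}.ncard = Fintype.card K ^ 3 :=
  count_linear_fiber (crossLin c) (crossLin_ne_zero hc) r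

lemma count_cross_ne {c : Matrix (Fin 2) (Fin 2) K} (hc : c ≠ 0) (r : K) :
    {B : Matrix (Fin 2) (Fin 2) K | cross c B ≠ r}.ncard =
      Fintype.card K ^ 4 - Fintype.card K ^ 3 :=
  count_linear_fiber_compl (crossLin c) (crossLin_ne_zero hc) r

lemma count_det_zero_ne_zero :
    {B : Matrix (Fin 2) (Fin 2) K | B ≠ 0 ∧ B.det = 0}.ncard =
      Fintype.card K ^ 4 -
        (Fintype.card K ^ 2 - 1) * (Fintype.card K ^ 2 - Fintype.card K) - 1 := by
  classical
  have hset : {B : Matrix (Fin 2) (Fin 2) K | B ≠ 0 ∧ B.det = 0} =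
      ({B : Matrix (Fin 2) (Fin 2) K | B.det ≠ 0} ∪ {0})ᶜ := by
    ext B
    by_cases h : B = 0 <;> simp [h]
  have hdisj : Disjoint {B : Matrix (Fin 2) (Fin 2) K | B.det ≠ 0} ({0} : Set _) := by
    rw [Set.disjoint_singleton_right]
    simp
  have hu : ({B : Matrix (Fin 2) (Fin 2) K | B.det ≠ 0} ∪ {0}).ncard =
      (Fintype.card K ^ 2 - 1) * (Fintype.card K ^ 2 - Fintype.card K) + 1 := by
    rw [Set.ncard_union_eq hdisj (Set.toFinite _) (Set.toFinite _), count_det_ne_zero,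
      Set.ncard_singleton]
  have h := Set.ncard_add_ncard_compl ({B : Matrix (Fin 2) (Fin 2) K | B.det ≠ 0} ∪ {0})
    (Set.toFinite _) (Set.toFinite _)
  rw [hu, card_matrix_two] at h
  rw [hset]
  omega

section Param
variable {p : ℕ} [hp : Fact p.Prime]

lemma pnz : (p : ℤ_[p]) ≠ 0 := Nat.cast_ne_zero.mpr hp.out.ne_zero

/-- canonical lift of a residue -/
noncomputable def lift1 (b : ZMod (p ^ 1)) : ℤ_[p] := (b.val : ℤ_[p])

/-- canonical lift of a residue matrix -/
noncomputable def liftMat (B : Matrix (Fin 2) (Fin 2) (ZMod (p ^ 1))) : Matrix (Fin 2) (Fin 2) ℤ_[p] :=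
  B.map lift1

lemma res_lift1 (b : ZMod (p ^ 1)) : PadicInt.toZModPow 1 (lift1 b) = b :=
  toZModPow_natCast_val 1 b

lemma liftMat_res (B : Matrix (Fin 2) (Fin 2) (ZMod (p ^ 1))) :
    (liftMat B).map (PadicInt.toZModPow 1) = B := by
  ext i j
  simp [liftMat, Matrix.map_apply, res_lift1]

lemma dvd_lift1_iff (b : ZMod (p ^ 1)) : (p : ℤ_[p]) ∣ lift1 b ↔ b = 0 := by
  haveI : NeZero (p ^ 1) := ⟨pow_ne_zero 1 hp.out.ne_zero⟩
  have := dvd_val_sub_iff (p := p) b 0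
  simpa [lift1, ZMod.val_zero] using this

lemma dvd_sub_lift1_iff (x : ℤ_[p]) (b : ZMod (p ^ 1)) :
    (p : ℤ_[p]) ∣ x - lift1 b ↔ PadicInt.toZModPow 1 x = b := by
  rw [← pow_one ((p : ℤ_[p])), ← toZModPow_eq_zero_iff, map_sub, res_lift1, sub_eq_zero]

lemma lift_eq_of_map_eq {m : ℕ} {X Y : Matrix (Fin 2) (Fin 2) ℤ_[p]}
    (h : X.map (PadicInt.toZModPow m) = Y.map (PadicInt.toZModPow m)) :
    ∃ D, X = Y + (p : ℤ_[p]) ^ m • D := by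
  have hd : ∀ i j, (p : ℤ_[p]) ^ m ∣ (X - Y) i j := fun i j => by
    rw [← toZModPow_eq_zero_iff]
    have h1 : PadicInt.toZModPow m (X i j) = PadicInt.toZModPow m (Y i j) := by
      have := congrFun (congrFun h i) j
      simpa [Matrix.map_apply] using this
    simp [Matrix.sub_apply, h1]
  refine ⟨Matrix.of (fun i j => (hd i j).choose), ?_⟩
  ext i j
  have hc := (hd i j).choose_spec
  have hc2 : X i j - Y i j = (p : ℤ_[p]) ^ m * (hd i j).choose := by
    simpa [Matrix.sub_apply] using hc
  simp only [Matrix.add_apply, Matrix.smul_apply, Matrix.of_apply, smul_eq_mul]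
  linear_combination hc2

variable (n : ℕ) (Mt : Matrix (Fin 2) (Fin 2) ℤ_[p])

/-- the p-adic lift of the parametrized lift -/
noncomputable def Phi (B : Matrix (Fin 2) (Fin 2) (ZMod (p ^ 1))) :
    Matrix (Fin 2) (Fin 2) ℤ_[p] :=
  Mt + (p : ℤ_[p]) ^ n • liftMat B

lemma isUnit_of_not_dvd {x : ℤ_[p]} (h : ¬ (p : ℤ_[p]) ∣ x) : IsUnit x := by
  rw [PadicInt.isUnit_iff]
  refine le_antisymm (PadicInt.norm_le_one x) (le_of_not_gt ?_)
  rw [PadicInt.norm_lt_one_iff_dvd]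
  exact h

lemma not_p_unit : ¬ IsUnit ((p : ℤ_[p])) := by
  rw [PadicInt.isUnit_iff]
  intro h
  have := (PadicInt.norm_lt_one_iff_dvd ((p : ℤ_[p]))).mpr dvd_rfl
  rw [h] at this
  exact lt_irrefl _ this

variable (hn : 1 ≤ n) (hu : IsUnit (Mt.map (PadicInt.toZModPow n)).det)

include hn hu in
lemma isUnit_det_Phi (B : Matrix (Fin 2) (Fin 2) (ZMod (p ^ 1))) :
    IsUnit (Phi n Mt B).det := by
  haveI : Fact (1 < p ^ 1) := ⟨by simpa using hp.out.one_lt⟩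
  apply isUnit_of_not_dvd
  intro hdvd
  have hpn : (p : ℤ_[p]) ∣ (p : ℤ_[p]) ^ n := dvd_pow_self _ (Nat.one_le_iff_ne_zero.mp hn)
  have hdet : (Phi n Mt B).det =
      Mt.det + (p : ℤ_[p]) ^ n * cross Mt (liftMat B) + ((p : ℤ_[p]) ^ n) ^ 2 * (liftMat B).det :=
    det_smul_add_fin_two _ _ _
  have hMtdet : (p : ℤ_[p]) ∣ Mt.det := by
    have h2 : (p : ℤ_[p]) ∣ (p : ℤ_[p]) ^ n * cross Mt (liftMat B) +
        ((p : ℤ_[p]) ^ n) ^ 2 * (liftMat B).det :=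
      dvd_add (hpn.mul_right _) ((hpn.trans (dvd_pow_self _ two_ne_zero)).mul_right _)
    have := dvd_sub hdvd h2
    rw [hdet] at this
    simpa using this
  obtain ⟨y, hy⟩ := hMtdet
  have h3 : IsUnit (PadicInt.toZModPow n Mt.det) := by
    rw [RingHom.map_det]
    simpa [RingHom.mapMatrix_apply] using hu
  rw [hy, _root_.map_mul] at h3
  have h4 : IsUnit ((p : ZMod (p ^ n))) := by
    simpa using isUnit_of_mul_isUnit_left h3
  have h5 : IsUnit ((p : ZMod (p ^ 1))) := by
    have := (ZMod.castHom (pow_dvd_pow p hn) (ZMod (p ^ 1))).isUnit_map h4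
    simpa using this
  have h6 : ((p : ZMod (p ^ 1))) = 0 := by
    have : ((p : ZMod (p ^ 1))) = ((p ^ 1 : ℕ) : ZMod (p ^ 1)) := by norm_num
    rw [this, ZMod.natCast_self]
  rw [h6] at h5
  exact zero_ne_one (isUnit_zero_iff.mp h5)

include hn hu in
/-- the parametrized lift in `GL₂(ZMod p^{n+1})` -/
noncomputable def psi (B : Matrix (Fin 2) (Fin 2) (ZMod (p ^ 1))) :
    GL (Fin 2) (ZMod (p ^ (n + 1))) :=
  (show IsUnit ((Phi n Mt B).map (PadicInt.toZModPow (n + 1))) from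
    (Matrix.isUnit_iff_isUnit_det _).mpr (by
      rw [← RingHom.mapMatrix_apply, ← RingHom.map_det]
      exact (isUnit_det_Phi n Mt hn hu B).map (PadicInt.toZModPow (n + 1)))).unit

lemma coe_psi (B : Matrix (Fin 2) (Fin 2) (ZMod (p ^ 1))) :
    (psi n Mt hn hu B : Matrix (Fin 2) (Fin 2) (ZMod (p ^ (n + 1)))) =
      (Phi n Mt B).map (PadicInt.toZModPow (n + 1)) :=
  IsUnit.unit_spec _

include hn hu in
lemma psi_injective : Function.Injective (psi n Mt hn hu) := by
  intro B₁ B₂ h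
  have hmat : (Phi n Mt B₁).map (PadicInt.toZModPow (n + 1)) =
      (Phi n Mt B₂).map (PadicInt.toZModPow (n + 1)) := by
    rw [← coe_psi n Mt hn hu, ← coe_psi n Mt hn hu, h]
  ext i j
  have hij : (p : ℤ_[p]) ^ (n + 1) ∣ (Phi n Mt B₁ - Phi n Mt B₂) i j := by
    rw [← toZModPow_eq_zero_iff]
    have := congrFun (congrFun hmat i) j
    simp only [Matrix.map_apply] at this
    simp [Matrix.sub_apply, this]
  have hent : (Phi n Mt B₁ - Phi n Mt B₂) i j =
      (p : ℤ_[p]) ^ n * (lift1 (B₁ i j) - lift1 (B₂ i j)) := by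
    simp [Phi, liftMat, Matrix.sub_apply, Matrix.add_apply, Matrix.smul_apply,
      Matrix.map_apply, smul_eq_mul]
    ring
  rw [hent, pow_succ] at hij
  have := (mul_dvd_mul_iff_left (pow_ne_zero n (pnz (p := p)))).mp hij
  exact (dvd_val_sub_iff _ _).mp this

variable {M : GL (Fin 2) (ZMod (p ^ n))}
  (hMt : Mt.map (PadicInt.toZModPow n) = (M : Matrix (Fin 2) (Fin 2) (ZMod (p ^ n))))

lemma coe_castGL (g : GL (Fin 2) (ZMod (p ^ (n + 1)))) :
    ((castGL p n g : GL (Fin 2) (ZMod (p ^ n))) : Matrix (Fin 2) (Fin 2) (ZMod (p ^ n))) =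
      (g : Matrix (Fin 2) (Fin 2) (ZMod (p ^ (n + 1)))).map
        (ZMod.castHom (pow_dvd_pow p (Nat.le_succ n)) (ZMod (p ^ n))) :=
  rfl

include hMt in
lemma psi_cast (B : Matrix (Fin 2) (Fin 2) (ZMod (p ^ 1))) :
    castGL p n (psi n Mt hn hu B) = M := by
  apply Units.ext
  rw [coe_castGL, coe_psi, Matrix.map_map, ← hMt]
  have hcomp : (ZMod.castHom (pow_dvd_pow p (Nat.le_succ n)) (ZMod (p ^ n))).comp
      (PadicInt.toZModPow (n + 1)) = PadicInt.toZModPow n :=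
    PadicInt.zmod_cast_comp_toZModPow n (n + 1) (Nat.le_succ n)
  have hfun : ⇑(ZMod.castHom (pow_dvd_pow p (Nat.le_succ n)) (ZMod (p ^ n))) ∘
      ⇑(PadicInt.toZModPow (n + 1)) = ⇑(PadicInt.toZModPow n : ℤ_[p] →+* ZMod (p ^ n)) := by
    rw [← hcomp]; rfl
  rw [hfun]
  have h0 : ∀ x : ℤ_[p], PadicInt.toZModPow n ((p : ℤ_[p]) ^ n * x) = 0 := fun x =>
    (toZModPow_eq_zero_iff _ _).mpr ⟨x, rfl⟩
  ext i j
  simp [Phi, liftMat, Matrix.map_apply, Matrix.add_apply, Matrix.smul_apply, smul_eq_mul, h0]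

include hMt in
lemma psi_surj (M' : GL (Fin 2) (ZMod (p ^ (n + 1)))) (hc : castGL p n M' = M) :
    ∃ B, psi n Mt hn hu B = M' := by
  classical
  set Nt : Matrix (Fin 2) (Fin 2) ℤ_[p] :=
    (M' : Matrix (Fin 2) (Fin 2) (ZMod (p ^ (n + 1)))).map (fun s => ((s.val : ℤ_[p]))) with hNtdef
  have hNt : Nt.map (PadicInt.toZModPow (n + 1)) =
      (M' : Matrix (Fin 2) (Fin 2) (ZMod (p ^ (n + 1)))) := by
    ext i j
    simp [hNtdef, Matrix.map_apply, toZModPow_natCast_val]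
  have hcomp : (ZMod.castHom (pow_dvd_pow p (Nat.le_succ n)) (ZMod (p ^ n))).comp
      (PadicInt.toZModPow (n + 1)) = PadicInt.toZModPow n :=
    PadicInt.zmod_cast_comp_toZModPow n (n + 1) (Nat.le_succ n)
  have hNtn : Nt.map (PadicInt.toZModPow n) = Mt.map (PadicInt.toZModPow n) := by
    rw [hMt]
    have : (M : Matrix (Fin 2) (Fin 2) (ZMod (p ^ n))) =
        (M' : Matrix (Fin 2) (Fin 2) (ZMod (p ^ (n + 1)))).map
          (ZMod.castHom (pow_dvd_pow p (Nat.le_succ n)) (ZMod (p ^ n))) := by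
      rw [← coe_castGL, hc]
    rw [this, ← hNt, Matrix.map_map, ← hcomp]
    rfl
  obtain ⟨C, hC⟩ := lift_eq_of_map_eq hNtn
  refine ⟨C.map (PadicInt.toZModPow 1), ?_⟩
  apply Units.ext
  rw [coe_psi, ← hNt]
  ext i j
  have hd : (p : ℤ_[p]) ^ (n + 1) ∣ (Phi n Mt (C.map (PadicInt.toZModPow 1)) - Nt) i j := by
    have hent : (Phi n Mt (C.map (PadicInt.toZModPow 1)) - Nt) i j =
        (p : ℤ_[p]) ^ n * (lift1 (PadicInt.toZModPow 1 (C i j)) - C i j) := by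
      rw [hC]
      simp [Phi, liftMat, Matrix.sub_apply, Matrix.add_apply, Matrix.smul_apply,
        Matrix.map_apply, smul_eq_mul]
      ring
    rw [hent, pow_succ]
    exact mul_dvd_mul_left _ (dvd_sub_comm.mpr ((dvd_sub_lift1_iff (C i j) _).mpr rfl))
  have : PadicInt.toZModPow (n + 1) ((Phi n Mt (C.map (PadicInt.toZModPow 1)) - Nt) i j) = 0 :=
    (toZModPow_eq_zero_iff _ _).mpr hd
  rw [Matrix.sub_apply, map_sub, sub_eq_zero] at this
  simpa [Matrix.map_apply] using this

include hMt in
lemma fiber_ncard (P : GL (Fin 2) (ZMod (p ^ (n + 1))) → Prop) :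
    {M' : GL (Fin 2) (ZMod (p ^ (n + 1))) | P M' ∧ castGL p n M' = M}.ncard =
      {B : Matrix (Fin 2) (Fin 2) (ZMod (p ^ 1)) | P (psi n Mt hn hu B)}.ncard := by
  have hset : {M' : GL (Fin 2) (ZMod (p ^ (n + 1))) | P M' ∧ castGL p n M' = M} =
      psi n Mt hn hu '' {B | P (psi n Mt hn hu B)} := by
    ext M'
    constructor
    · rintro ⟨hP, hc⟩
      obtain ⟨B, rfl⟩ := psi_surj n Mt hn hu hMt M' hc
      exact ⟨B, hP, rfl⟩
    · rintro ⟨B, hB, rfl⟩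
      exact ⟨hB, psi_cast n Mt hn hu hMt B⟩
  rw [hset, Set.ncard_image_of_injective _ (psi_injective n Mt hn hu)]

end Param

section Conditions
variable {p : ℕ} [hp : Fact p.Prime]

lemma map_sub_one (m : ℕ) (X : Matrix (Fin 2) (Fin 2) ℤ_[p]) :
    X.map (PadicInt.toZModPow m) - 1 = (X - 1).map (PadicInt.toZModPow m) := by
  ext i j
  by_cases h : i = j <;>
    simp [Matrix.map_apply, Matrix.sub_apply, Matrix.one_apply, h]

lemma pdvd_cancel (k : ℕ) (x : ℤ_[p]) :
    (p : ℤ_[p]) ^ (k + 1) ∣ (p : ℤ_[p]) ^ k * x ↔ (p : ℤ_[p]) ∣ x := by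
  rw [pow_succ]
  exact mul_dvd_mul_iff_left (pow_ne_zero k (pnz (p := p)))

lemma p_dvd_det_liftMat_iff (B : Matrix (Fin 2) (Fin 2) (ZMod (p ^ 1))) :
    (p : ℤ_[p]) ∣ (liftMat B).det ↔ B.det = 0 := by
  rw [← pow_one ((p : ℤ_[p])), ← toZModPow_eq_zero_iff, RingHom.map_det,
    RingHom.mapMatrix_apply, liftMat_res]

lemma p_dvd_det_shift_iff (B : Matrix (Fin 2) (Fin 2) (ZMod (p ^ 1)))
    (D : Matrix (Fin 2) (Fin 2) ℤ_[p]) :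
    (p : ℤ_[p]) ∣ (liftMat B + (p : ℤ_[p]) • D).det ↔ B.det = 0 := by
  rw [det_smul_add_fin_two]
  constructor
  · intro h
    have h2 : (p : ℤ_[p]) ∣ (p : ℤ_[p]) * cross (liftMat B) D + (p : ℤ_[p]) ^ 2 * D.det :=
      dvd_add (dvd_mul_right _ _) ((dvd_pow_self _ two_ne_zero).mul_right _)
    have := dvd_sub h h2
    rw [← p_dvd_det_liftMat_iff]
    simpa using this
  · intro h
    have h1 : (p : ℤ_[p]) ∣ (liftMat B).det := (p_dvd_det_liftMat_iff B).mpr h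
    exact dvd_add (dvd_add h1 (dvd_mul_right _ _)) ((dvd_pow_self _ two_ne_zero).mul_right _)

variable (n : ℕ) (Mt : Matrix (Fin 2) (Fin 2) ℤ_[p]) (hn : 1 ≤ n)
  (hu : IsUnit (Mt.map (PadicInt.toZModPow n)).det)

lemma psi_sub_one_entry (B : Matrix (Fin 2) (Fin 2) (ZMod (p ^ 1))) (i j : Fin 2) :
    (((psi n Mt hn hu B : GL (Fin 2) (ZMod (p ^ (n + 1)))) :
        Matrix (Fin 2) (Fin 2) (ZMod (p ^ (n + 1)))) - 1) i j =
      PadicInt.toZModPow (n + 1) ((Phi n Mt B - 1) i j) := by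
  rw [coe_psi, map_sub_one]
  simp [Matrix.map_apply]

lemma psi_entry_dvd_iff (k : ℕ) (hk : k ≤ n + 1) (B : Matrix (Fin 2) (Fin 2) (ZMod (p ^ 1)))
    (i j : Fin 2) :
    ((p : ZMod (p ^ (n + 1))) ^ k ∣
        (((psi n Mt hn hu B : GL (Fin 2) (ZMod (p ^ (n + 1)))) :
          Matrix (Fin 2) (Fin 2) (ZMod (p ^ (n + 1)))) - 1) i j) ↔
      ((p : ℤ_[p]) ^ k ∣ (Phi n Mt B - 1) i j) := by
  rw [psi_sub_one_entry]
  exact zmod_dvd_transfer hk _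

lemma lifts_psi_iff (B : Matrix (Fin 2) (Fin 2) (ZMod (p ^ 1)))
    (Mt' : Matrix (Fin 2) (Fin 2) ℤ_[p]) :
    Mt'.map (PadicInt.toZModPow (n + 1)) =
        ((psi n Mt hn hu B : GL (Fin 2) (ZMod (p ^ (n + 1)))) :
          Matrix (Fin 2) (Fin 2) (ZMod (p ^ (n + 1)))) ↔
      ∃ D, Mt' = Phi n Mt B + (p : ℤ_[p]) ^ (n + 1) • D := by
  rw [coe_psi]
  constructor
  · exact lift_eq_of_map_eq
  · rintro ⟨D, rfl⟩
    ext i j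
    have h0 : PadicInt.toZModPow (n + 1) ((p : ℤ_[p]) ^ (n + 1) * D i j) = 0 :=
      (toZModPow_eq_zero_iff _ _).mpr ⟨_, rfl⟩
    simp [Matrix.map_apply, Matrix.add_apply, Matrix.smul_apply, smul_eq_mul, h0]

end Conditions

section Cases
variable {p : ℕ} [hp : Fact p.Prime]

lemma pow_n_eq_zero (n : ℕ) : ((p : ZMod (p ^ n))) ^ n = 0 := by
  have : ((p : ZMod (p ^ n))) ^ n = ((p ^ n : ℕ) : ZMod (p ^ n)) := by push_cast; rfl
  rw [this, ZMod.natCast_self]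

lemma M_eq_one {n a b : ℕ} (han : n ≤ a) {M : GL (Fin 2) (ZMod (p ^ n))}
    (hM : M ∈ Hset p a b n) : M = 1 := by
  have h1 := hM.1
  apply Units.ext
  ext i j
  have h2 := h1 i j
  rw [min_eq_right han, pow_n_eq_zero, zero_dvd_iff, Matrix.sub_apply] at h2
  have := sub_eq_zero.mp h2
  simpa using this

lemma case_n_lt_a (a b n : ℕ) (hn : 1 ≤ n) (hna : n < a)
    (M : GL (Fin 2) (ZMod (p ^ n))) (hM : M ∈ Hset p a b n) :
    {M' : GL (Fin 2) (ZMod (p ^ (n + 1))) |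
        M' ∈ Hset p a b (n + 1) ∧ castGL p n M' = M}.ncard = 1 := by
  have hM1 : M = 1 := M_eq_one hna.le hM
  have hset : {M' : GL (Fin 2) (ZMod (p ^ (n + 1))) |
      M' ∈ Hset p a b (n + 1) ∧ castGL p n M' = M} = {1} := by
    ext M'
    simp only [Set.mem_setOf_eq, Set.mem_singleton_iff]
    constructor
    · rintro ⟨hmem, _⟩
      exact M_eq_one (by omega) hmem
    · rintro rfl
      refine ⟨⟨?_, ?_, ?_, ?_⟩, ?_⟩
      · intro i j
        simp
      · intro h; omega
      · intro h; omega
      · intro h; omega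
      · rw [hM1]; exact map_one _
  rw [hset, Set.ncard_singleton]

end Cases

section CaseEq
variable {p : ℕ} [hp : Fact p.Prime]

lemma case_n_eq_a (b n : ℕ) (hn : 1 ≤ n)
    (M : GL (Fin 2) (ZMod (p ^ n))) (hM : M ∈ Hset p n b n) :
    {M' : GL (Fin 2) (ZMod (p ^ (n + 1))) |
        M' ∈ Hset p n b (n + 1) ∧ castGL p n M' = M}.ncard =
      if b = 0 then (Fintype.card (ZMod (p ^ 1)) ^ 2 - 1) *
          (Fintype.card (ZMod (p ^ 1)) ^ 2 - Fintype.card (ZMod (p ^ 1)))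
        else Fintype.card (ZMod (p ^ 1)) ^ 4 -
          (Fintype.card (ZMod (p ^ 1)) ^ 2 - 1) *
            (Fintype.card (ZMod (p ^ 1)) ^ 2 - Fintype.card (ZMod (p ^ 1))) - 1 := by
  haveI : Fact (Nat.Prime (p ^ 1)) := ⟨by simpa using hp.out⟩
  have hM1 : M = 1 := M_eq_one le_rfl hM
  have hMt : (1 : Matrix (Fin 2) (Fin 2) ℤ_[p]).map (PadicInt.toZModPow n) =
      (M : Matrix (Fin 2) (Fin 2) (ZMod (p ^ n))) := by
    rw [hM1, Units.val_one, Matrix.map_one _ (map_zero _) (map_one _)]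
  set Mt : Matrix (Fin 2) (Fin 2) ℤ_[p] := 1 with hMtdef
  have hu : IsUnit (Mt.map (PadicInt.toZModPow n)).det := by
    rw [hMtdef, hMt, hM1]; simp
  rw [fiber_ncard n Mt hn hu (by rw [hMtdef]; exact hMt) (· ∈ Hset p n b (n + 1))]
  have hPhisub : ∀ B, Phi n Mt B - 1 = (p : ℤ_[p]) ^ n • liftMat B := by
    intro B; rw [hMtdef]; simp [Phi]
  have hPhiD : ∀ (B : Matrix (Fin 2) (Fin 2) (ZMod (p ^ 1))) (D : Matrix (Fin 2) (Fin 2) ℤ_[p]),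
      Phi n Mt B + (p : ℤ_[p]) ^ (n + 1) • D - 1 =
        (p : ℤ_[p]) ^ n • (liftMat B + (p : ℤ_[p]) • D) := by
    intro B D
    ext i j
    rw [hMtdef]
    simp only [Phi, Matrix.add_apply, Matrix.smul_apply, Matrix.sub_apply, smul_eq_mul, pow_succ,
      Matrix.one_apply]
    by_cases h : i = j <;> simp [h] <;> ring
  have hdetD : ∀ (B : Matrix (Fin 2) (Fin 2) (ZMod (p ^ 1))) (D : Matrix (Fin 2) (Fin 2) ℤ_[p]),
      (Phi n Mt B + (p : ℤ_[p]) ^ (n + 1) • D - 1).det =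
        (p : ℤ_[p]) ^ (2 * n) * (liftMat B + (p : ℤ_[p]) • D).det := by
    intro B D
    rw [hPhiD, Matrix.det_smul, Fintype.card_fin, ← pow_mul, mul_comm n 2]
  have hdet1 : ∀ B : Matrix (Fin 2) (Fin 2) (ZMod (p ^ 1)),
      (Phi n Mt B - 1).det = (p : ℤ_[p]) ^ (2 * n) * (liftMat B).det := by
    intro B
    rw [hPhisub, Matrix.det_smul, Fintype.card_fin, ← pow_mul, mul_comm n 2]
  -- condition 1 holds always
  have hc1 : ∀ B : Matrix (Fin 2) (Fin 2) (ZMod (p ^ 1)), ∀ i j : Fin 2,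
      ((p : ZMod (p ^ (n + 1))) ^ min n (n + 1) ∣
        (((psi n Mt hn hu B : GL (Fin 2) (ZMod (p ^ (n + 1)))) :
          Matrix (Fin 2) (Fin 2) (ZMod (p ^ (n + 1)))) - 1) i j) := by
    intro B i j
    rw [min_eq_left (Nat.le_succ n), psi_entry_dvd_iff n Mt hn hu _ (Nat.le_succ n), hPhisub]
    exact ⟨lift1 (B i j), by simp [Matrix.smul_apply, liftMat, Matrix.map_apply, smul_eq_mul]⟩
  -- condition 2 is equivalent to B ≠ 0
  have hc2 : ∀ B : Matrix (Fin 2) (Fin 2) (ZMod (p ^ 1)),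
      (¬ ∀ i j : Fin 2, ((p : ZMod (p ^ (n + 1))) ^ (n + 1) ∣
        (((psi n Mt hn hu B : GL (Fin 2) (ZMod (p ^ (n + 1)))) :
          Matrix (Fin 2) (Fin 2) (ZMod (p ^ (n + 1)))) - 1) i j)) ↔ B ≠ 0 := by
    intro B
    constructor
    · intro hnot hB0
      apply hnot
      intro i j
      rw [psi_entry_dvd_iff n Mt hn hu (n + 1) le_rfl, hPhisub]
      have hz : B i j = 0 := by rw [hB0]; rfl
      exact ⟨0, by simp [Matrix.smul_apply, liftMat, Matrix.map_apply, smul_eq_mul, hz, lift1]⟩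
    · intro hB hall
      apply hB
      ext i j
      have := (psi_entry_dvd_iff n Mt hn hu (n + 1) le_rfl B i j).mp (hall i j)
      rw [hPhisub] at this
      have h2 : (p : ℤ_[p]) ^ (n + 1) ∣ (p : ℤ_[p]) ^ n * lift1 (B i j) := by
        simpa [Matrix.smul_apply, liftMat, Matrix.map_apply, smul_eq_mul] using this
      have h3 := (dvd_lift1_iff _).mp ((pdvd_cancel n _).mp h2)
      simp [h3]
  rcases eq_or_ne b 0 with rfl | hb
  · -- b = 0 : condition 4 active, set is {B | det B ≠ 0}
    have hsetB : {B : Matrix (Fin 2) (Fin 2) (ZMod (p ^ 1)) |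
        psi n Mt hn hu B ∈ Hset p n 0 (n + 1)} = {B | B.det ≠ 0} := by
      ext B
      simp only [Hset, Set.mem_setOf_eq]
      constructor
      · rintro ⟨h1, h2, h3, h4⟩
        have h4' := h4 (by omega) (Phi n Mt B) (coe_psi n Mt hn hu B).symm
        intro hdet0
        apply h4'.2
        rw [hdet1, show 2 * n + 0 + 1 = 2 * n + 1 from by ring, pdvd_cancel]
        exact (p_dvd_det_liftMat_iff B).mpr hdet0
      · intro hdet
        refine ⟨hc1 B, fun _ => (hc2 B).mpr ?_, fun _ h => absurd h (by omega), ?_⟩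
        · intro hB0; rw [hB0] at hdet; simp at hdet
        · intro _ Mt' hMt'
          obtain ⟨D, rfl⟩ := (lifts_psi_iff n Mt hn hu B Mt').mp hMt'
          rw [hdetD]
          constructor
          · exact ⟨(liftMat B + (p : ℤ_[p]) • D).det,
              by rw [show 2 * n + 0 = 2 * n from by ring]⟩
          · rw [show 2 * n + 0 + 1 = 2 * n + 1 from by ring, pdvd_cancel,
              p_dvd_det_shift_iff]
            exact hdet
    rw [if_pos rfl, hsetB, count_det_ne_zero]
  · -- b > 0 : condition 3 active, set is {B | B ≠ 0 ∧ det B = 0}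
    have hsetB : {B : Matrix (Fin 2) (Fin 2) (ZMod (p ^ 1)) |
        psi n Mt hn hu B ∈ Hset p n b (n + 1)} = {B | B ≠ 0 ∧ B.det = 0} := by
      ext B
      simp only [Hset, Set.mem_setOf_eq]
      constructor
      · rintro ⟨h1, h2, h3, h4⟩
        refine ⟨(hc2 B).mp (h2 (by omega)), ?_⟩
        have h3' := h3 (by omega) (by omega) (Phi n Mt B) (coe_psi n Mt hn hu B).symm
        rw [hdet1, show n + (n + 1) = 2 * n + 1 from by ring, pdvd_cancel,
          p_dvd_det_liftMat_iff] at h3'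
        exact h3'
      · rintro ⟨hB0, hdet⟩
        refine ⟨hc1 B, fun _ => (hc2 B).mpr hB0, ?_, fun h => absurd h (by omega)⟩
        intro _ _ Mt' hMt'
        obtain ⟨D, rfl⟩ := (lifts_psi_iff n Mt hn hu B Mt').mp hMt'
        rw [hdetD, show n + (n + 1) = 2 * n + 1 from by ring, pdvd_cancel,
          p_dvd_det_shift_iff]
        exact hdet
    rw [if_neg hb, hsetB, count_det_zero_ne_zero]

end CaseEq

section CaseGt
variable {p : ℕ} [hp : Fact p.Prime]

lemma case_a_lt_n (a b n : ℕ) (hn : 1 ≤ n) (han : a < n)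
    (M : GL (Fin 2) (ZMod (p ^ n))) (hM : M ∈ Hset p a b n) :
    {M' : GL (Fin 2) (ZMod (p ^ (n + 1))) |
        M' ∈ Hset p a b (n + 1) ∧ castGL p n M' = M}.ncard =
      (if n < a + b then Fintype.card (ZMod (p ^ 1)) ^ 3
       else if n = a + b then
         Fintype.card (ZMod (p ^ 1)) ^ 4 - Fintype.card (ZMod (p ^ 1)) ^ 3
       else Fintype.card (ZMod (p ^ 1)) ^ 4) := by
  haveI : Fact (Nat.Prime (p ^ 1)) := ⟨by simpa using hp.out⟩
  obtain ⟨hM1, hM2, hM3, hM4⟩ := hM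
  set Mt : Matrix (Fin 2) (Fin 2) ℤ_[p] :=
    (M : Matrix (Fin 2) (Fin 2) (ZMod (p ^ n))).map (fun s => ((s.val : ℤ_[p]))) with hMtdef
  have hMt : Mt.map (PadicInt.toZModPow n) = (M : Matrix (Fin 2) (Fin 2) (ZMod (p ^ n))) := by
    ext i j
    simp [hMtdef, Matrix.map_apply, toZModPow_natCast_val]
  have hu : IsUnit (Mt.map (PadicInt.toZModPow n)).det := by
    rw [hMt]
    exact Matrix.GeneralLinearGroup.val_det_apply M ▸ (Matrix.GeneralLinearGroup.det M).isUnit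
  rw [fiber_ncard n Mt hn hu hMt (· ∈ Hset p a b (n + 1))]
  have hmapsub : (Mt - 1).map (PadicInt.toZModPow n) =
      (M : Matrix (Fin 2) (Fin 2) (ZMod (p ^ n))) - 1 := by
    rw [← map_sub_one, hMt]
  have h1 : ∀ i j, (p : ℤ_[p]) ^ a ∣ (Mt - 1) i j := by
    intro i j
    have h0 := hM1 i j
    rw [min_eq_left han.le, ← hmapsub] at h0
    have h2 : ((p : ZMod (p ^ n)) ^ a ∣ PadicInt.toZModPow n ((Mt - 1) i j)) := by
      simpa [Matrix.map_apply] using h0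
    exact (zmod_dvd_transfer han.le _).mp h2
  set A : Matrix (Fin 2) (Fin 2) ℤ_[p] := Matrix.of (fun i j => (h1 i j).choose) with hAdef
  have hA : Mt - 1 = (p : ℤ_[p]) ^ a • A := by
    ext i j
    rw [Matrix.smul_apply, hAdef, smul_eq_mul]
    exact (h1 i j).choose_spec
  set m := n - a with hmdef
  have ham : a + m = n := by omega
  have hiA : ∃ i0 j0, ¬ (p : ℤ_[p]) ∣ A i0 j0 := by
    by_contra hcon
    push_neg at hcon
    apply hM2 han
    intro i j
    have hd : (p : ℤ_[p]) ^ (a + 1) ∣ (Mt - 1) i j := by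
      rw [hA, Matrix.smul_apply, smul_eq_mul, pow_succ]
      exact mul_dvd_mul_left _ (hcon i j)
    have h2 := (zmod_dvd_transfer (show a + 1 ≤ n by omega) _).mpr hd
    rw [← hmapsub]
    simpa [Matrix.map_apply] using h2
  obtain ⟨i0, j0, hi0⟩ := hiA
  have hPhiD : ∀ (B : Matrix (Fin 2) (Fin 2) (ZMod (p ^ 1))) (D : Matrix (Fin 2) (Fin 2) ℤ_[p]),
      Phi n Mt B + (p : ℤ_[p]) ^ (n + 1) • D - 1 =
        (p : ℤ_[p]) ^ a • (A + (p : ℤ_[p]) ^ m • (liftMat B + (p : ℤ_[p]) • D)) := by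
    intro B D
    have hMt1 : Mt = 1 + (p : ℤ_[p]) ^ a • A := by rw [← hA]; abel
    have hp1 : (p : ℤ_[p]) ^ n = (p : ℤ_[p]) ^ a * (p : ℤ_[p]) ^ m := by rw [← pow_add, ham]
    have hp2 : (p : ℤ_[p]) ^ (n + 1) = (p : ℤ_[p]) ^ a * ((p : ℤ_[p]) ^ m * p) := by
      rw [← pow_succ, ← pow_add]
      congr 1
      omega
    ext i j
    rw [hMt1]
    simp only [Phi, Matrix.add_apply, Matrix.smul_apply, Matrix.sub_apply, Matrix.one_apply,
      smul_eq_mul]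
    by_cases h : i = j <;> simp only [h, if_true, if_false] <;> rw [hp1, hp2] <;> ring
  have hPhiB : ∀ B : Matrix (Fin 2) (Fin 2) (ZMod (p ^ 1)),
      Phi n Mt B - 1 = (p : ℤ_[p]) ^ a • (A + (p : ℤ_[p]) ^ m • liftMat B) := by
    intro B
    have := hPhiD B 0
    simpa using this
  have hdetD : ∀ (B : Matrix (Fin 2) (Fin 2) (ZMod (p ^ 1))) (D : Matrix (Fin 2) (Fin 2) ℤ_[p]),
      (Phi n Mt B + (p : ℤ_[p]) ^ (n + 1) • D - 1).det =
        (p : ℤ_[p]) ^ (2 * a) * (A + (p : ℤ_[p]) ^ m • (liftMat B + (p : ℤ_[p]) • D)).det := by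
    intro B D
    rw [hPhiD, Matrix.det_smul, Fintype.card_fin, ← pow_mul, mul_comm a 2]
  have hdetB : ∀ B : Matrix (Fin 2) (Fin 2) (ZMod (p ^ 1)),
      (Phi n Mt B - 1).det =
        (p : ℤ_[p]) ^ (2 * a) * (A + (p : ℤ_[p]) ^ m • liftMat B).det := by
    intro B
    rw [hPhiB, Matrix.det_smul, Fintype.card_fin, ← pow_mul, mul_comm a 2]
  have hc1 : ∀ (B : Matrix (Fin 2) (Fin 2) (ZMod (p ^ 1))) (i j : Fin 2),
      ((p : ZMod (p ^ (n + 1))) ^ (min a (n + 1)) ∣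
        (((psi n Mt hn hu B : GL (Fin 2) (ZMod (p ^ (n + 1)))) :
          Matrix (Fin 2) (Fin 2) (ZMod (p ^ (n + 1)))) - 1) i j) := by
    intro B i j
    rw [min_eq_left (by omega), psi_entry_dvd_iff n Mt hn hu a (by omega), hPhiB]
    exact ⟨_, by rw [Matrix.smul_apply, smul_eq_mul]⟩
  have hc2 : ∀ B : Matrix (Fin 2) (Fin 2) (ZMod (p ^ 1)),
      ¬ ∀ i j : Fin 2, ((p : ZMod (p ^ (n + 1))) ^ (a + 1) ∣
        (((psi n Mt hn hu B : GL (Fin 2) (ZMod (p ^ (n + 1)))) :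
          Matrix (Fin 2) (Fin 2) (ZMod (p ^ (n + 1)))) - 1) i j) := by
    intro B hall
    have h0 := (psi_entry_dvd_iff n Mt hn hu (a + 1) (by omega) B i0 j0).mp (hall i0 j0)
    rw [hPhiB, Matrix.smul_apply, smul_eq_mul] at h0
    have h2 := (pdvd_cancel a _).mp h0
    rw [Matrix.add_apply, Matrix.smul_apply, smul_eq_mul] at h2
    apply hi0
    have h3 : (p : ℤ_[p]) ∣ (p : ℤ_[p]) ^ m * liftMat B i0 j0 :=
      (dvd_pow_self _ (by omega)).mul_right _
    simpa using dvd_sub h2 h3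
  rcases lt_trichotomy n (a + b) with hlt | heq | hgt
  · -- n < a + b
    have hdvdA : (p : ℤ_[p]) ^ m ∣ A.det := by
      have h3 := hM3 han (by omega) Mt hMt
      rw [hA, Matrix.det_smul, Fintype.card_fin, ← pow_mul, mul_comm a 2] at h3
      have hsplit : (p : ℤ_[p]) ^ (a + n) = (p : ℤ_[p]) ^ (2 * a) * (p : ℤ_[p]) ^ m := by
        rw [← pow_add]; congr 1; omega
      rw [hsplit] at h3
      exact (mul_dvd_mul_iff_left (pow_ne_zero _ (pnz (p := p)))).mp h3
    obtain ⟨δ, hδ⟩ := hdvdA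
    set Abar := A.map (PadicInt.toZModPow 1) with hAbardef
    have hAbar0 : Abar ≠ 0 := by
      intro h0
      apply hi0
      have h2 : PadicInt.toZModPow 1 (A i0 j0) = 0 := by
        have := congrFun (congrFun h0 i0) j0
        simpa [hAbardef, Matrix.map_apply] using this
      rw [← pow_one ((p : ℤ_[p]))]
      exact (toZModPow_eq_zero_iff 1 _).mp h2
    have hkey : ∀ B : Matrix (Fin 2) (Fin 2) (ZMod (p ^ 1)),
        ((p : ℤ_[p]) ∣ δ + cross A (liftMat B)) ↔
          cross Abar B = - PadicInt.toZModPow 1 δ := by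
      intro B
      rw [← pow_one ((p : ℤ_[p])), ← toZModPow_eq_zero_iff, map_add,
        cross_map (PadicInt.toZModPow 1), liftMat_res, ← hAbardef]
      constructor
      · intro h
        have := eq_neg_of_add_eq_zero_right h
        linear_combination this
      · intro h
        rw [h]
        ring
    have hdetin : ∀ (B : Matrix (Fin 2) (Fin 2) (ZMod (p ^ 1))) (D : Matrix (Fin 2) (Fin 2) ℤ_[p]),
        (A + (p : ℤ_[p]) ^ m • (liftMat B + (p : ℤ_[p]) • D)).det =
          (p : ℤ_[p]) ^ m * (δ + cross A (liftMat B) + (p : ℤ_[p]) * cross A D +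
            (p : ℤ_[p]) ^ m * (liftMat B + (p : ℤ_[p]) • D).det) := by
      intro B D
      rw [det_smul_add_fin_two, cross_add_right, cross_smul_right, hδ]
      ring
    have hd0 : ∀ B : Matrix (Fin 2) (Fin 2) (ZMod (p ^ 1)),
        (A + (p : ℤ_[p]) ^ m • liftMat B).det =
          (p : ℤ_[p]) ^ m * (δ + cross A (liftMat B) +
            (p : ℤ_[p]) ^ m * (liftMat B).det) := by
      intro B
      rw [det_smul_add_fin_two, hδ]
      ring
    have hsetB : {B : Matrix (Fin 2) (Fin 2) (ZMod (p ^ 1)) |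
        psi n Mt hn hu B ∈ Hset p a b (n + 1)} =
        {B | cross Abar B = - PadicInt.toZModPow 1 δ} := by
      ext B
      simp only [Hset, Set.mem_setOf_eq]
      constructor
      · rintro ⟨-, -, h3, -⟩
        have h3' := h3 (by omega) (by omega) (Phi n Mt B) (coe_psi n Mt hn hu B).symm
        rw [hdetB, hd0] at h3'
        have hsplit : (p : ℤ_[p]) ^ (a + (n + 1)) =
            (p : ℤ_[p]) ^ (2 * a) * (p : ℤ_[p]) ^ (m + 1) := by
          rw [← pow_add]; congr 1; omega
        rw [hsplit] at h3'
        have h4 := (mul_dvd_mul_iff_left (pow_ne_zero (2 * a) (pnz (p := p)))).mp h3'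
        have h5 := (pdvd_cancel m _).mp h4
        have h6 : (p : ℤ_[p]) ∣ (p : ℤ_[p]) ^ m * (liftMat B).det :=
          (dvd_pow_self _ (by omega)).mul_right _
        have h7 : (p : ℤ_[p]) ∣ δ + cross A (liftMat B) := by
          simpa using dvd_sub h5 h6
        exact (hkey B).mp h7
      · intro hcross
        refine ⟨hc1 B, fun _ => hc2 B, ?_, fun h => absurd h (by omega)⟩
        intro _ _ Mt' hMt'
        obtain ⟨D, rfl⟩ := (lifts_psi_iff n Mt hn hu B Mt').mp hMt'
        rw [hdetD, hdetin]
        have h7 := (hkey B).mpr hcross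
        have h8 : (p : ℤ_[p]) ∣ (δ + cross A (liftMat B) + (p : ℤ_[p]) * cross A D +
            (p : ℤ_[p]) ^ m * (liftMat B + (p : ℤ_[p]) • D).det) :=
          dvd_add (dvd_add h7 (dvd_mul_right _ _)) ((dvd_pow_self _ (by omega)).mul_right _)
        obtain ⟨w, hw⟩ := h8
        rw [hw]
        have hsplit : (p : ℤ_[p]) ^ (a + (n + 1)) =
            (p : ℤ_[p]) ^ (2 * a) * ((p : ℤ_[p]) ^ m * (p : ℤ_[p])) := by
          rw [← pow_succ, ← pow_add]; congr 1; omega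
        exact ⟨w, by rw [hsplit]; ring⟩
    rw [if_pos hlt, hsetB, count_cross_eq hAbar0]
  · -- n = a + b
    have hdvdA : (p : ℤ_[p]) ^ m ∣ A.det := by
      have h3 := hM3 han (le_of_eq heq) Mt hMt
      rw [hA, Matrix.det_smul, Fintype.card_fin, ← pow_mul, mul_comm a 2] at h3
      have hsplit : (p : ℤ_[p]) ^ (a + n) = (p : ℤ_[p]) ^ (2 * a) * (p : ℤ_[p]) ^ m := by
        rw [← pow_add]; congr 1; omega
      rw [hsplit] at h3
      exact (mul_dvd_mul_iff_left (pow_ne_zero _ (pnz (p := p)))).mp h3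
    obtain ⟨δ, hδ⟩ := hdvdA
    set Abar := A.map (PadicInt.toZModPow 1) with hAbardef
    have hAbar0 : Abar ≠ 0 := by
      intro h0
      apply hi0
      have h2 : PadicInt.toZModPow 1 (A i0 j0) = 0 := by
        have := congrFun (congrFun h0 i0) j0
        simpa [hAbardef, Matrix.map_apply] using this
      rw [← pow_one ((p : ℤ_[p]))]
      exact (toZModPow_eq_zero_iff 1 _).mp h2
    have hkey : ∀ B : Matrix (Fin 2) (Fin 2) (ZMod (p ^ 1)),
        ((p : ℤ_[p]) ∣ δ + cross A (liftMat B)) ↔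
          cross Abar B = - PadicInt.toZModPow 1 δ := by
      intro B
      rw [← pow_one ((p : ℤ_[p])), ← toZModPow_eq_zero_iff, map_add,
        cross_map (PadicInt.toZModPow 1), liftMat_res, ← hAbardef]
      constructor
      · intro h
        have := eq_neg_of_add_eq_zero_right h
        linear_combination this
      · intro h
        rw [h]
        ring
    have hdetin : ∀ (B : Matrix (Fin 2) (Fin 2) (ZMod (p ^ 1))) (D : Matrix (Fin 2) (Fin 2) ℤ_[p]),
        (A + (p : ℤ_[p]) ^ m • (liftMat B + (p : ℤ_[p]) • D)).det =
          (p : ℤ_[p]) ^ m * (δ + cross A (liftMat B) + (p : ℤ_[p]) * cross A D +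
            (p : ℤ_[p]) ^ m * (liftMat B + (p : ℤ_[p]) • D).det) := by
      intro B D
      rw [det_smul_add_fin_two, cross_add_right, cross_smul_right, hδ]
      ring
    have hd0 : ∀ B : Matrix (Fin 2) (Fin 2) (ZMod (p ^ 1)),
        (A + (p : ℤ_[p]) ^ m • liftMat B).det =
          (p : ℤ_[p]) ^ m * (δ + cross A (liftMat B) +
            (p : ℤ_[p]) ^ m * (liftMat B).det) := by
      intro B
      rw [det_smul_add_fin_two, hδ]
      ring
    have hsplit2 : (p : ℤ_[p]) ^ (2 * a + b) = (p : ℤ_[p]) ^ (2 * a) * (p : ℤ_[p]) ^ m := by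
      rw [← pow_add]; congr 1; omega
    have hsplit3 : (p : ℤ_[p]) ^ (2 * a + b + 1) =
        (p : ℤ_[p]) ^ (2 * a) * ((p : ℤ_[p]) ^ m * (p : ℤ_[p])) := by
      rw [← pow_succ, ← pow_add]; congr 1; omega
    have hsetB : {B : Matrix (Fin 2) (Fin 2) (ZMod (p ^ 1)) |
        psi n Mt hn hu B ∈ Hset p a b (n + 1)} =
        {B | cross Abar B ≠ - PadicInt.toZModPow 1 δ} := by
      ext B
      simp only [Hset, Set.mem_setOf_eq]
      constructor
      · rintro ⟨-, -, -, h4⟩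
        have h4' := h4 (by omega) (Phi n Mt B) (coe_psi n Mt hn hu B).symm
        intro hcross
        apply h4'.2
        rw [hdetB, hd0]
        have h7 := (hkey B).mpr hcross
        have h8 : (p : ℤ_[p]) ∣ (δ + cross A (liftMat B) +
            (p : ℤ_[p]) ^ m * (liftMat B).det) :=
          dvd_add h7 ((dvd_pow_self _ (by omega)).mul_right _)
        obtain ⟨w, hw⟩ := h8
        rw [hw]
        exact ⟨w, by rw [hsplit3]; ring⟩
      · intro hcross
        refine ⟨hc1 B, fun _ => hc2 B, fun _ h => absurd h (by omega), ?_⟩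
        intro _ Mt' hMt'
        obtain ⟨D, rfl⟩ := (lifts_psi_iff n Mt hn hu B Mt').mp hMt'
        rw [hdetD, hdetin]
        constructor
        · exact ⟨(δ + cross A (liftMat B) + (p : ℤ_[p]) * cross A D +
            (p : ℤ_[p]) ^ m * (liftMat B + (p : ℤ_[p]) • D).det), by rw [hsplit2]; ring⟩
        · intro hdvd
          rw [hsplit3] at hdvd
          have h4 := (mul_dvd_mul_iff_left (pow_ne_zero (2 * a) (pnz (p := p)))).mp hdvd
          have h5 := (mul_dvd_mul_iff_left (pow_ne_zero m (pnz (p := p)))).mp h4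
          have h6 : (p : ℤ_[p]) ∣ (p : ℤ_[p]) * cross A D +
              (p : ℤ_[p]) ^ m * (liftMat B + (p : ℤ_[p]) • D).det :=
            dvd_add (dvd_mul_right _ _) ((dvd_pow_self _ (by omega)).mul_right _)
          have h7 : (p : ℤ_[p]) ∣ δ + cross A (liftMat B) := by
            have h8 := dvd_sub h5 h6
            have e : δ + cross A (liftMat B) + (p : ℤ_[p]) * cross A D +
                (p : ℤ_[p]) ^ m * (liftMat B + (p : ℤ_[p]) • D).det -
                ((p : ℤ_[p]) * cross A D +
                  (p : ℤ_[p]) ^ m * (liftMat B + (p : ℤ_[p]) • D).det) =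
                δ + cross A (liftMat B) := by ring
            rwa [e] at h8
          exact hcross ((hkey B).mp h7)
    rw [if_neg (by omega), if_pos heq, hsetB, count_cross_ne hAbar0]
  · -- a + b < n
    have hval := hM4 (by omega) Mt hMt
    have hsetB : {B : Matrix (Fin 2) (Fin 2) (ZMod (p ^ 1)) |
        psi n Mt hn hu B ∈ Hset p a b (n + 1)} = Set.univ := by
      ext B
      simp only [Hset, Set.mem_setOf_eq, Set.mem_univ, iff_true]
      refine ⟨hc1 B, fun _ => hc2 B, fun _ h => absurd h (by omega), ?_⟩
      intro _ Mt' hMt'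
      obtain ⟨D, rfl⟩ := (lifts_psi_iff n Mt hn hu B Mt').mp hMt'
      have hX : Phi n Mt B + (p : ℤ_[p]) ^ (n + 1) • D - 1 =
          (Mt - 1) + (p : ℤ_[p]) ^ n • (liftMat B + (p : ℤ_[p]) • D) := by
        ext i j
        simp only [Phi, Matrix.add_apply, Matrix.smul_apply, Matrix.sub_apply, smul_eq_mul,
          pow_succ]
        ring
      rw [hX]
      apply valEq_of_dvd_sub hval
      rw [det_smul_add_fin_two]
      have hdiff : (Mt - 1).det + (p : ℤ_[p]) ^ n * cross (Mt - 1) (liftMat B + (p : ℤ_[p]) • D) +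
          ((p : ℤ_[p]) ^ n) ^ 2 * (liftMat B + (p : ℤ_[p]) • D).det - (Mt - 1).det =
          (p : ℤ_[p]) ^ n * cross (Mt - 1) (liftMat B + (p : ℤ_[p]) • D) +
          ((p : ℤ_[p]) ^ n) ^ 2 * (liftMat B + (p : ℤ_[p]) • D).det := by ring
      rw [hdiff]
      apply dvd_add
      · obtain ⟨w, hw⟩ := dvd_cross_left h1 (liftMat B + (p : ℤ_[p]) • D)
        rw [hw]
        refine Dvd.dvd.trans (pow_dvd_pow (p : ℤ_[p]) (show 2 * a + b + 1 ≤ n + a by omega)) ?_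
        exact ⟨w, by rw [pow_add]; ring⟩
      · refine Dvd.dvd.trans (pow_dvd_pow (p : ℤ_[p]) (show 2 * a + b + 1 ≤ n * 2 by omega)) ?_
        exact ⟨(liftMat B + (p : ℤ_[p]) • D).det, by rw [pow_mul]⟩
    rw [if_neg (by omega), if_neg (by omega), hsetB, count_univ_matrix]

end CaseGt

lemma arith_b {p : ℕ} (hp2 : 2 ≤ p) :
    p ^ 4 - (p ^ 2 - 1) * (p ^ 2 - p) - 1 = (p + 1) * (p ^ 2 - 1) := by
  have e1 : 1 ≤ p ^ 2 := Nat.one_le_pow _ _ (by omega)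
  have e2 : p ≤ p ^ 2 := by nlinarith
  have e3 : (p ^ 2 - 1) * (p ^ 2 - p) ≤ p ^ 4 := by
    calc (p ^ 2 - 1) * (p ^ 2 - p) ≤ p ^ 2 * p ^ 2 :=
          Nat.mul_le_mul (Nat.sub_le _ _) (Nat.sub_le _ _)
      _ = p ^ 4 := by ring
  have h2 : (p ^ 2 - 1) * p ^ 2 = p ^ 4 - p ^ 2 := by
    rw [Nat.sub_mul, one_mul]
    congr 1
    ring
  have e4 : (p ^ 2 - 1) * (p ^ 2 - p) + 1 ≤ p ^ 4 := by
    have h3 : (p ^ 2 - 1) * (p ^ 2 - p) ≤ (p ^ 2 - 1) * p ^ 2 :=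
      Nat.mul_le_mul_left _ (Nat.sub_le _ _)
    have h4 : p ^ 4 - p ^ 2 ≤ p ^ 4 - 1 := Nat.sub_le_sub_left e1 _
    have h5 : 1 ≤ p ^ 4 := Nat.one_le_pow _ _ (by omega)
    omega
  have e5 : 1 ≤ p ^ 4 - (p ^ 2 - 1) * (p ^ 2 - p) :=
    Nat.le_sub_of_add_le (by omega)
  zify [e1, e2, e3, e5]
  ring

/-- every `M ∈ H_{a,b}(n)` has exactly `f(n)` lifts in `H_{a,b}(n+1)`. -/
theorem Hset_lift_count (p : ℕ) [Fact p.Prime] (a b n : ℕ) (hn : 1 ≤ n)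
    (M : GL (Fin 2) (ZMod (p ^ n))) (hM : M ∈ Hset p a b n) :
    {M' : GL (Fin 2) (ZMod (p ^ (n + 1))) |
        M' ∈ Hset p a b (n + 1) ∧ castGL p n M' = M}.ncard = liftCount p a b n := by
  haveI : NeZero (p ^ 1) := ⟨pow_ne_zero 1 (Fact.out : p.Prime).ne_zero⟩
  have hp2 : 2 ≤ p := (Fact.out : p.Prime).two_le
  have hq : Fintype.card (ZMod (p ^ 1)) = p := by rw [ZMod.card, pow_one]
  rcases lt_trichotomy n a with h | h | h
  · rw [case_n_lt_a a b n hn h M hM]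
    simp [liftCount, h]
  · subst h
    rw [case_n_eq_a b n hn M hM, hq]
    by_cases hb : b = 0
    · simp [liftCount, hb]
    · rw [if_neg hb]
      simp only [liftCount, lt_irrefl, if_false, if_pos rfl, if_neg hb]
      exact arith_b hp2
  · rw [case_a_lt_n a b n hn h M hM, hq]
    simp only [liftCount, if_neg (show ¬ n < a by omega), if_neg (show ¬ n = a by omega)]
end Counting
end Padic
end

section
/- Let C = C(0,d) be a ramified Cartan subgroup of GL₂(ℤ_ℓ), i.e. d ∈ ℤ_ℓ is nonzero and ℓ divides d if ℓ is odd. Let G be an open subgroup of C and let n₀ ≥ 1 be an integer such that every M ∈ C with M ≡ I (mod ℓ^{n₀}) belongs to G. Then for all integers a, b ≥ 0, all n ≥ n₀, and all M₁, M₂ ∈ 𝓜_{a,b}(G)(n), the number of elements of 𝓜_{a,b}(G)(n+1) reducing to M₁ modulo ℓⁿ equals the number of elements of 𝓜_{a,b}(G)(n+1) reducing to M₂ modulo ℓⁿ. -/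
open Matrix Polynomial

namespace PadicAux

variable {p : ℕ} [hp : Fact p.Prime]

local notation "P" => (p : ℤ_[p])

noncomputable def res {p : ℕ} [Fact p.Prime] : ℤ_[p] →+* ZMod p := PadicInt.toZMod

lemma res_eq_zero_iff {x : ℤ_[p]} : res x = 0 ↔ P ∣ x := by
  have h : x ∈ RingHom.ker (PadicInt.toZMod (p := p)) ↔ P ∣ x := by
    rw [PadicInt.ker_toZMod, PadicInt.maximalIdeal_eq_span_p, Ideal.mem_span_singleton]
  simpa [res, RingHom.mem_ker] using h

lemma res_eq_iff {x y : ℤ_[p]} : res x = res y ↔ P ∣ x - y := by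
  rw [← res_eq_zero_iff, map_sub, sub_eq_zero]

lemma not_p_dvd_iff_isUnit {x : ℤ_[p]} : ¬ P ∣ x ↔ IsUnit x := by
  rw [PadicInt.isUnit_iff, ← PadicInt.norm_lt_one_iff_dvd]
  constructor
  · intro h; exact le_antisymm (PadicInt.norm_le_one x) (not_lt.mp h)
  · intro h; rw [h]; exact lt_irrefl 1

lemma isUnit_iff_res {x : ℤ_[p]} : IsUnit x ↔ res x ≠ 0 := by
  rw [← not_p_dvd_iff_isUnit, Ne, res_eq_zero_iff]

/-- canonical lift of a residue -/
noncomputable def lft (ψ : ZMod p) : ℤ_[p] := ((ZMod.val ψ : ℕ) : ℤ_[p])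

lemma res_lft (ψ : ZMod p) : res (lft ψ) = ψ := by
  haveI : NeZero p := ⟨hp.out.ne_zero⟩
  rw [lft, map_natCast]
  exact ZMod.natCast_rightInverse ψ

lemma res_eq_iff_dvd_sub {x : ℤ_[p]} {ψ : ZMod p} : res x = ψ ↔ P ∣ x - lft ψ := by
  rw [← res_eq_iff, res_lft]

/-! ### valEq basics -/

lemma valEq_def {x : ℤ_[p]} {b : ℕ} : valEq x b ↔ (P ^ b ∣ x ∧ ¬ (P ^ (b+1) ∣ x)) := Iff.rfl

lemma valEq_unit {x : ℤ_[p]} (hx : IsUnit x) : valEq x 0 := by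
  constructor
  · simp
  · intro h
    rw [pow_one] at h
    exact (not_p_dvd_iff_isUnit.mpr hx) h

lemma valEq_unit_mul {u x : ℤ_[p]} {b : ℕ} (hu : IsUnit u) :
    valEq (u * x) b ↔ valEq x b := by
  unfold valEq
  constructor <;> intro ⟨h1, h2⟩
  · exact ⟨hu.dvd_mul_left.mp h1, fun hh => h2 (hu.dvd_mul_left.mpr hh)⟩
  · exact ⟨hu.dvd_mul_left.mpr h1, fun hh => h2 (hu.dvd_mul_left.mp hh)⟩

lemma valEq_pow_shift {x : ℤ_[p]} {b c : ℕ} :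
    valEq (P ^ c * x) (c + b) ↔ valEq x b := by
  have key : ∀ m : ℕ, ((P ^ (c+m) ∣ P ^ c * x) ↔ P ^ m ∣ x) := fun m => by
    rw [pow_add]
    exact mul_dvd_mul_iff_left (pow_ne_zero c (PadicInt.prime_p).ne_zero)
  unfold valEq
  rw [key b, show c + b + 1 = c + (b+1) by ring, key (b+1)]

lemma valEq_add_of_dvd {x y : ℤ_[p]} {b : ℕ} (hx : valEq x b) (hy : P ^ (b+1) ∣ y) :
    valEq (x + y) b := by
  obtain ⟨h1, h2⟩ := hx
  refine ⟨dvd_add h1 (dvd_trans (pow_dvd_pow _ (Nat.le_succ b)) hy), fun hh => h2 ?_⟩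
  have := dvd_sub hh hy
  simpa using this

lemma valEq_decomp {x : ℤ_[p]} {b : ℕ} (h : valEq x b) :
    ∃ u : ℤ_[p], IsUnit u ∧ x = P ^ b * u := by
  obtain ⟨⟨u, hu⟩, h2⟩ := h
  refine ⟨u, ?_, hu⟩
  rw [← not_p_dvd_iff_isUnit]
  intro hd
  exact h2 (by rw [hu, pow_succ]; exact mul_dvd_mul_left _ hd)

lemma valEq_of_decomp {u : ℤ_[p]} {b : ℕ} (hu : IsUnit u) : valEq (P ^ b * u) b := by
  have := (valEq_pow_shift (x := u) (b := 0) (c := b)).mpr (valEq_unit hu)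
  simpa using this

lemma valEq_neg {x : ℤ_[p]} {b : ℕ} : valEq (-x) b ↔ valEq x b := by
  unfold valEq
  simp [dvd_neg]

lemma valEq_sq {z : ℤ_[p]} {c : ℕ} (h : valEq z c) : valEq (z^2) (2*c) := by
  obtain ⟨u, hu, rfl⟩ := valEq_decomp h
  have : ((p:ℤ_[p]) ^ c * u)^2 = P ^ (2*c) * u^2 := by ring
  rw [this]
  exact valEq_of_decomp (hu.pow 2)

/-- prime-power divisibility: if `P^b ∣ x` and `¬ P^k ∣ x` then ... extraction -/
lemma exists_val_of_not_dvd {x : ℤ_[p]} {k : ℕ} (hx : ¬ P ^ k ∣ x) :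
    ∃ c u, c < k ∧ IsUnit u ∧ x = P ^ c * u := by
  have hx0 : x ≠ 0 := by rintro rfl; exact hx (dvd_zero _)
  have hcless : x = P ^ x.valuation * (PadicInt.unitCoeff hx0 : ℤ_[p]) := by
    rw [mul_comm, ← PadicInt.unitCoeff_spec hx0]
  refine ⟨_, _, ?_, (PadicInt.unitCoeff hx0).isUnit, hcless⟩
  by_contra hc
  push_neg at hc
  refine hx ?_
  rw [hcless]
  exact dvd_mul_of_dvd_left (pow_dvd_pow _ hc) _

end PadicAux
namespace PadicAux

variable {p : ℕ} [hp : Fact p.Prime]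

local notation "P" => (p : ℤ_[p])

lemma le_of_pow_dvd_pow_mul_unit {b c : ℕ} {u : ℤ_[p]} (hu : IsUnit u)
    (h : P ^ b ∣ P ^ c * u) : b ≤ c := by
  by_contra hlt
  push_neg at hlt
  have h2 : P ^ (c+1) ∣ P ^ c * u := dvd_trans (pow_dvd_pow _ (by omega)) h
  rw [pow_succ] at h2
  have := (mul_dvd_mul_iff_left (pow_ne_zero c (PadicInt.prime_p (p := p)).ne_zero)).mp h2
  exact (not_p_dvd_iff_isUnit.mpr hu) this

lemma pow_dvd_cancel {a c : ℕ} {y : ℤ_[p]} (h : P ^ (c + a) ∣ P ^ c * y) : P ^ a ∣ y := by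
  rw [pow_add] at h
  exact (mul_dvd_mul_iff_left (pow_ne_zero c (PadicInt.prime_p (p := p)).ne_zero)).mp h

lemma two_eq_p (hp2 : p = 2) : (2 : ℤ_[p]) = P := by subst hp2; norm_cast

lemma isUnit_two_of_ne (hp2 : p ≠ 2) : IsUnit (2 : ℤ_[p]) := by
  haveI : NeZero p := ⟨hp.out.ne_zero⟩
  rw [isUnit_iff_res]
  intro h0
  have h2 : (2:ℤ_[p]) = ((2:ℕ) : ℤ_[p]) := by norm_cast
  rw [h2, map_natCast] at h0
  have hdvd : p ∣ 2 := (ZMod.natCast_eq_zero_iff 2 p).mp h0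
  exact hp2 ((Nat.prime_dvd_prime_iff_eq hp.out Nat.prime_two).mp hdvd)

lemma two_cancel {j : ℕ} {x : ℤ_[p]} (h : P ^ (j+1) ∣ 2 * x) : P ^ j ∣ x := by
  rcases eq_or_ne p 2 with hp2 | hp2
  · rw [two_eq_p hp2] at h
    have h' : P ^ (1+j) ∣ P ^ 1 * x := by
      rw [pow_one, show 1+j = j+1 by ring]
      exact h
    exact pow_dvd_cancel h' 
  · have h2 := (isUnit_two_of_ne hp2).dvd_mul_left.mp h
    exact dvd_trans (pow_dvd_pow _ (Nat.le_succ j)) h2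

lemma four_cancel {j : ℕ} {x : ℤ_[p]} (h : P ^ (j+2) ∣ 4 * x) : P ^ j ∣ x := by
  have h4 : (4 : ℤ_[p]) = 2 * 2 := by norm_num
  rw [h4, mul_assoc] at h
  have := two_cancel (j := j+1) (by rwa [show j+1+1 = j+2 by ring])
  exact two_cancel this

lemma exists_val {d : ℤ_[p]} (hd : d ≠ 0) : ∃ e du, IsUnit du ∧ d = P ^ e * du := by
  exact ⟨d.valuation, _, (PadicInt.unitCoeff hd).isUnit,
    by rw [mul_comm, ← PadicInt.unitCoeff_spec hd]⟩

/-! ### the 1D lifting set -/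

noncomputable def LS (d z : ℤ_[p]) (k b : ℕ) : Set (ZMod p) :=
  {ψ | ∃ u : ℤ_[p], res u = ψ ∧ valEq ((z + P ^ k * u)^2 - d) b}

lemma zero_mem_LS {d z : ℤ_[p]} {k b : ℕ} (hz : valEq (z^2 - d) b) : (0 : ZMod p) ∈ LS d z k b :=
  ⟨0, map_zero _, by simpa using hz⟩

/-- sign trick -/
lemma LS_ncard_sign {d z1 z2 : ℤ_[p]} {k b : ℕ}
    (h : P ^ k ∣ z1 - z2 ∨ P ^ k ∣ z1 + z2) :
    (LS d z1 k b).ncard = (LS d z2 k b).ncard := by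
  rcases h with ⟨w, hw⟩ | ⟨w, hw⟩
  · have himg : LS d z2 k b = (fun ψ => ψ + res w) '' LS d z1 k b := by
      ext φ
      constructor
      · rintro ⟨v, hv, hval⟩
        refine ⟨φ - res w, ⟨v - w, by rw [map_sub, hv], ?_⟩, by ring⟩
        have : z1 + P ^ k * (v - w) = z2 + P ^ k * v := by
          have : z1 = z2 + P ^ k * w := by rw [← hw]; ring
          rw [this]; ring
        rwa [this]
      · rintro ⟨ψ, ⟨u, hu, hval⟩, rfl⟩
        refine ⟨u + w, by rw [map_add, hu], ?_⟩
        have : z2 + P ^ k * (u + w) = z1 + P ^ k * u := by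
          have : z2 = z1 - P ^ k * w := by rw [← hw]; ring
          rw [this]; ring
        rwa [this]
    rw [himg, Set.ncard_image_of_injective _ (add_left_injective (res w))]
  · have himg : LS d z2 k b = (fun ψ => -ψ - res w) '' LS d z1 k b := by
      ext φ
      constructor
      · rintro ⟨v, hv, hval⟩
        refine ⟨-φ - res w, ⟨-(v + w), by rw [map_neg, map_add, hv]; ring, ?_⟩, by ring⟩
        have heq : z1 + P ^ k * (-(v + w)) = -(z2 + P ^ k * v) := by
          have : z1 = -z2 + P ^ k * w := by rw [← hw]; ring
          rw [this]; ring
        rw [heq]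
        rwa [neg_pow, show ((-1:ℤ_[p]))^2 = 1 by ring, one_mul]
      · rintro ⟨ψ, ⟨u, hu, hval⟩, rfl⟩
        refine ⟨-(u + w), by rw [map_neg, map_add, hu]; ring, ?_⟩
        have heq : z2 + P ^ k * (-(u + w)) = -(z1 + P ^ k * u) := by
          have : z2 = -z1 + P ^ k * w := by rw [← hw]; ring
          rw [this]; ring
        rw [heq]
        rwa [neg_pow, show ((-1:ℤ_[p]))^2 = 1 by ring, one_mul]
    have hinj : Function.Injective (fun ψ : ZMod p => -ψ - res w) := by
      intro a b hab
      simp only [sub_left_inj, neg_inj] at hab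
      exact hab
    rw [himg, Set.ncard_image_of_injective _ hinj]

/-- dichotomy: sign congruence or both deep -/
lemma sign_or_deep {d z1 z2 : ℤ_[p]} {k b : ℕ} (hkb : k ≤ b)
    (h1 : valEq (z1^2 - d) b) (h2 : valEq (z2^2 - d) b) :
    (P ^ k ∣ z1 - z2 ∨ P ^ k ∣ z1 + z2) ∨
      (P ^ (b+1) ∣ P ^ k * (2 * z1) ∧ P ^ (b+1) ∣ P ^ k * (2 * z2)) := by
  by_cases hd1 : P ^ k ∣ z1 - z2
  · exact Or.inl (Or.inl hd1)
  by_cases hd2 : P ^ k ∣ z1 + z2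
  · exact Or.inl (Or.inr hd2)
  right
  obtain ⟨c1, u1, hc1, hu1, he1⟩ := exists_val_of_not_dvd hd1
  obtain ⟨c2, u2, hc2, hu2, he2⟩ := exists_val_of_not_dvd hd2
  have hprod : P ^ b ∣ P ^ (c1 + c2) * (u1 * u2) := by
    have hid : P ^ (c1+c2) * (u1 * u2) = (z1 - z2) * (z1 + z2) := by
      rw [he1, he2]; ring
    have hid2 : (z1 - z2) * (z1 + z2) = (z1^2 - d) - (z2^2 - d) := by ring
    rw [hid, hid2]
    exact dvd_sub h1.1 h2.1
  have hble : b ≤ c1 + c2 := le_of_pow_dvd_pow_mul_unit (hu1.mul hu2) hprod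
  have hm1 : b + 1 - k ≤ c1 := by omega
  have hm2 : b + 1 - k ≤ c2 := by omega
  have hdvd1 : P ^ (b+1-k) ∣ z1 - z2 := he1 ▸ dvd_mul_of_dvd_left (pow_dvd_pow _ hm1) _
  have hdvd2 : P ^ (b+1-k) ∣ z1 + z2 := he2 ▸ dvd_mul_of_dvd_left (pow_dvd_pow _ hm2) _
  constructor
  · have : P ^ (b+1-k) ∣ 2 * z1 := by
      have := dvd_add hdvd1 hdvd2
      simpa [two_mul] using this
    calc P ^ (b+1) = P ^ k * P ^ (b+1-k) := by rw [← pow_add]; congr 1; omega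
    _ ∣ P ^ k * (2 * z1) := mul_dvd_mul_left _ this
  · have : P ^ (b+1-k) ∣ 2 * z2 := by
      have := dvd_sub hdvd2 hdvd1
      simpa [two_mul] using this
    calc P ^ (b+1) = P ^ k * P ^ (b+1-k) := by rw [← pow_add]; congr 1; omega
    _ ∣ P ^ k * (2 * z2) := mul_dvd_mul_left _ this

end PadicAux
namespace PadicAux

variable {p : ℕ} [hp : Fact p.Prime]

local notation "P" => (p : ℤ_[p])

lemma zmod2_add : ∀ A B : ZMod 2, A ≠ 0 → B ≠ 0 → A + B = 0 := by decide

lemma valEq_zero_iff {x : ℤ_[p]} : valEq x 0 ↔ ¬ (P ∣ x) := by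
  unfold valEq
  simp

/-- universal leaf -/
lemma leaf_univ {d z : ℤ_[p]} {k b : ℕ} (hz : valEq (z^2 - d) b)
    (h2z : P ^ (b+1) ∣ P ^ k * (2 * z)) (h2k : b + 1 ≤ 2 * k) :
    LS d z k b = Set.univ := by
  ext ψ
  simp only [Set.mem_univ, iff_true]
  refine ⟨lft ψ, res_lft ψ, ?_⟩
  have hid : (z + P ^ k * lft ψ)^2 - d
      = (z^2 - d) + (lft ψ * (P ^ k * (2 * z)) + P ^ (2*k) * (lft ψ)^2) := by
    ring
  rw [hid]
  exact valEq_add_of_dvd hz (dvd_add (Dvd.dvd.mul_left h2z _)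
    (dvd_mul_of_dvd_left (pow_dvd_pow _ h2k) _))

/-- singleton leaf: `e ≥ 2k+1`, `b ≥ 2k+1`, `v(z) ≥ k+1` -/
lemma leaf_single {d z : ℤ_[p]} {k b : ℕ} (hz : valEq (z^2 - d) b)
    (hd2k : P ^ (2*k+1) ∣ d) (hb : 2*k + 1 ≤ b) (hzz : P ^ (k+1) ∣ z) :
    LS d z k b = {0} := by
  obtain ⟨z2, hz2⟩ := hzz
  ext ψ
  simp only [Set.mem_singleton_iff]
  constructor
  · rintro ⟨u, hres, hval⟩
    by_contra hψ0
    have hψ0' : res u ≠ 0 := by rw [hres]; exact hψ0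
    have hg : IsUnit (P * z2 + u) := by
      rw [isUnit_iff_res]
      have h0 : res (P * z2 + u) = res u := by
        have hres0 : res ((p:ℤ_[p]) * z2) = 0 := res_eq_zero_iff.mpr (dvd_mul_right _ _)
        rw [_root_.map_add, hres0, zero_add]
      rw [h0]
      exact hψ0'
    have hform : (z + P ^ k * u)^2 - d = P ^ (2*k) * ((P * z2 + u)^2) - d := by
      rw [hz2]; ring
    have hnot : ¬ P ^ (2*k+1) ∣ (z + P ^ k * u)^2 - d := by
      rw [hform]
      intro hdd
      have h1 : P ^ (2*k+1) ∣ P ^ (2*k) * ((P * z2 + u)^2) := by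
        have := dvd_add hdd hd2k
        simpa using this
      have h2 : P ∣ (P * z2 + u)^2 := by
        have := pow_dvd_cancel (c := 2*k) (a := 1) h1
        simpa using this
      have h3 : P ∣ (P * z2 + u) := (PadicInt.prime_p).dvd_of_dvd_pow h2
      exact (not_p_dvd_iff_isUnit.mpr hg) h3
    exact absurd (dvd_trans (pow_dvd_pow _ hb) hval.1) hnot
  · rintro rfl
    exact zero_mem_LS hz

/-- singleton leaf for `p = 2`, `b = 2k`, `e ≥ 2k+1` -/
lemma leaf_single2 {d z : ℤ_[p]} {k : ℕ} (hp2 : p = 2)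
    (hz : valEq (z^2 - d) (2*k)) (hd2k : P ^ (2*k+1) ∣ d) (hzz : P ^ k ∣ z) :
    LS d z k (2*k) = {0} := by
  obtain ⟨z', hz'⟩ := hzz
  have hzu : IsUnit z' := by
    rw [← not_p_dvd_iff_isUnit]
    rintro ⟨z2, hz2⟩
    refine hz.2 ?_
    have hform : z^2 - d = P ^ (2*k+1) * (P * z2^2) - d := by
      rw [hz', hz2]; ring
    rw [hform]
    exact dvd_sub (dvd_mul_right _ _) hd2k
  ext ψ
  simp only [Set.mem_singleton_iff]
  constructor
  · rintro ⟨u, hres, hval⟩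
    by_contra hψ0
    have hψ0' : res u ≠ 0 := by rw [hres]; exact hψ0
    have hz'0 : res z' ≠ 0 := isUnit_iff_res.mp hzu
    have hsum : P ∣ z' + u := by
      rw [← res_eq_zero_iff, _root_.map_add]
      subst hp2
      exact zmod2_add _ _ hz'0 hψ0'
    obtain ⟨s, hs⟩ := hsum
    have hz'' : z' = P * s - u := by rw [← hs]; ring
    have hform : (z + P ^ k * u)^2 - d = P ^ (2*k+1) * (P * s^2) - d := by
      rw [hz', hz'']; ring
    refine hval.2 ?_
    rw [hform]
    exact dvd_sub (dvd_mul_right _ _) hd2k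
  · rintro rfl
    exact zero_mem_LS hz

/-- quadratic-residue leaf: `d = P^{2k} du`, `b = 2k`, `v(z) ≥ k+1` -/
lemma leaf_QR {d du z : ℤ_[p]} {k : ℕ} (hd : d = P ^ (2*k) * du)
    (hzz : P ^ (k+1) ∣ z) (hz : valEq (z^2 - d) (2*k)) :
    LS d z k (2*k) = {ψ : ZMod p | ψ = 0 ∨ ψ * ψ ≠ res du} := by
  obtain ⟨z2, hz2⟩ := hzz
  have key : ∀ g : ℤ_[p], (z + P ^ k * g)^2 - d = P ^ (2*k) * ((P * z2 + g)^2 - du) := by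
    intro g
    rw [hd, hz2]; ring
  have keyval : ∀ g : ℤ_[p],
      (valEq ((z + P ^ k * g)^2 - d) (2*k) ↔ ¬ (P ∣ ((P * z2 + g)^2 - du))) := by
    intro g
    rw [key g]
    exact (valEq_pow_shift (b := 0) (c := 2*k)).trans valEq_zero_iff
  have resg : ∀ g : ℤ_[p], res ((P * z2 + g)^2 - du) = res g * res g - res du := by
    intro g
    have h1 : res ((p:ℤ_[p]) * z2) = 0 := res_eq_zero_iff.mpr (dvd_mul_right _ _)
    rw [_root_.map_sub, _root_.map_pow, _root_.map_add, h1, zero_add, sq]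
  ext ψ
  simp only [Set.mem_setOf_eq]
  constructor
  · rintro ⟨u, hres, hval⟩
    by_cases hψ0 : ψ = 0
    · exact Or.inl hψ0
    right
    have hv := (keyval u).mp hval
    rw [← res_eq_zero_iff, resg, hres] at hv
    intro hcon
    exact hv (by rw [hcon]; ring)
  · intro h
    rcases h with rfl | hne
    · exact zero_mem_LS hz
    · refine ⟨lft ψ, res_lft ψ, (keyval (lft ψ)).mpr ?_⟩
      rw [← res_eq_zero_iff, resg, res_lft]
      intro hcon
      exact hne (by linear_combination hcon)

end PadicAux
namespace PadicAux

variable {p : ℕ} [hp : Fact p.Prime]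

local notation "P" => (p : ℤ_[p])

lemma zmod2_sq : ∀ A B : ZMod 2, A ≠ 0 → B ≠ 0 → A^2 - B = 0 := by decide

lemma main1D {d z1 z2 : ℤ_[p]} {k b : ℕ} (hd : d ≠ 0) (hk : 1 ≤ k)
    (h1 : valEq (z1^2 - d) b) (h2 : valEq (z2^2 - d) b) :
    (LS d z1 k b).ncard = (LS d z2 k b).ncard := by
  by_cases hbk : b < k
  · have hu : ∀ z : ℤ_[p], valEq (z^2-d) b → LS d z k b = Set.univ := fun z hz =>
      leaf_univ hz (dvd_trans (pow_dvd_pow _ (by omega : b+1 ≤ k))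
        (dvd_mul_right _ _)) (by omega)
    rw [hu z1 h1, hu z2 h2]
  push_neg at hbk
  rcases sign_or_deep hbk h1 h2 with hsign | ⟨hdeep1, hdeep2⟩
  · exact LS_ncard_sign hsign
  by_cases hb2k : b + 1 ≤ 2*k
  · rw [leaf_univ h1 hdeep1 hb2k, leaf_univ h2 hdeep2 hb2k]
  push_neg at hb2k
  have hb2k' : 2*k ≤ b := by omega
  obtain ⟨e, du, hdu, hde⟩ := exists_val hd
  have hd_e1 : ¬ P^(e+1) ∣ d := by
    intro hcon
    rw [hde, pow_succ] at hcon
    have := (mul_dvd_mul_iff_left (pow_ne_zero e (PadicInt.prime_p (p := p)).ne_zero)).mp hcon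
    exact (not_p_dvd_iff_isUnit.mpr hdu) this
  rcases lt_trichotomy e (2*k) with helt | heq | hegt
  · -- vacuous : e < 2k ≤ b
    exfalso
    have hz2 : P ^ (2*k) ∣ z1^2 := by
      have h2z : P ^ (b+1-k) ∣ 2*z1 := by
        refine pow_dvd_cancel (c := k) (a := b+1-k) ?_
        rw [show k + (b+1-k) = b+1 by omega]
        exact hdeep1
      obtain ⟨t, ht⟩ := h2z
      have hsq : P ^ (2*k+2) ∣ 4*(z1^2) := by
        refine dvd_trans (pow_dvd_pow _ (by omega : 2*k+2 ≤ (b+1-k) + (b+1-k))) ?_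
        exact ⟨t^2, by rw [pow_add]; linear_combination (2*z1 + P^(b+1-k)*t) * ht⟩
      exact four_cancel hsq
    have hc1 : P^(e+1) ∣ z1^2 := dvd_trans (pow_dvd_pow _ (by omega)) hz2
    have hc2 : P^(e+1) ∣ z1^2 - d := dvd_trans (pow_dvd_pow _ (by omega : e+1 ≤ b)) h1.1
    exact hd_e1 (by simpa using dvd_sub hc1 hc2)
  · -- e = 2k
    subst heq
    rcases eq_or_lt_of_le hb2k' with hbeq | hblt
    · -- b = 2k : QR leaf
      subst hbeq
      have hzz : ∀ z : ℤ_[p], valEq (z^2-d) (2*k) → P^(2*k+1) ∣ P^k*(2*z) → P^(k+1) ∣ z := by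
        intro z hz hdeep
        rcases eq_or_ne p 2 with hp2 | hp2
        · have hk2 : P^k ∣ z := by
            have hh1 : P^(k + (k+1)) ∣ P^k * (2*z) := by
              rw [show k+(k+1) = 2*k+1 by omega]
              exact hdeep
            have hh2 : P^(k+1) ∣ 2*z := pow_dvd_cancel hh1
            rw [two_eq_p hp2] at hh2
            have hh3 : P^(1 + k) ∣ P^1 * z := by
              rw [pow_one, show 1+k = k+1 by ring]
              exact hh2
            exact pow_dvd_cancel hh3
          obtain ⟨z', hz'⟩ := hk2
          rcases em (P ∣ z') with hdz | hdz
          · obtain ⟨z2, hz2⟩ := hdz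
            exact ⟨z2, by rw [hz', hz2]; ring⟩
          · exfalso
            have hform : z^2 - d = P^(2*k)*(z'^2 - du) := by rw [hz', hde]; ring
            have hval0 : valEq (z'^2 - du) 0 := by
              rw [hform] at hz
              exact (valEq_pow_shift (b := 0) (c := 2*k)).mp hz
            refine (valEq_zero_iff.mp hval0) ?_
            rw [← res_eq_zero_iff, _root_.map_sub, _root_.map_pow]
            have hz'0 : res z' ≠ 0 := isUnit_iff_res.mp (not_p_dvd_iff_isUnit.mp hdz)
            have hdu0 : res du ≠ 0 := isUnit_iff_res.mp hdu
            subst hp2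
            exact zmod2_sq _ _ hz'0 hdu0
        · have hh1 : P^(k + (k+1)) ∣ P^k*(2*z) := by
            rw [show k+(k+1) = 2*k+1 by omega]
            exact hdeep
          have hh2 : P^(k+1) ∣ 2*z := pow_dvd_cancel hh1
          exact (isUnit_two_of_ne hp2).dvd_mul_left.mp hh2
      rw [leaf_QR hde (hzz z1 h1 hdeep1) h1, leaf_QR hde (hzz z2 h2 hdeep2) h2]
    · -- b > 2k : vacuous
      exfalso
      have hzz1 : P^(k+1) ∣ z1 := by
        have hh2 : P^(k+2) ∣ 2*z1 := by
          refine pow_dvd_cancel (c := k) ?_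
          exact dvd_trans (pow_dvd_pow _ (by omega : k+(k+2) ≤ b+1)) hdeep1
        exact two_cancel hh2
      obtain ⟨z2, hz2⟩ := hzz1
      have hc1 : P^(2*k+1) ∣ z1^2 := ⟨P*z2^2, by rw [hz2]; ring⟩
      have hc2 : P^(2*k+1) ∣ z1^2 - d := dvd_trans (pow_dvd_pow _ (by omega)) h1.1
      exact hd_e1 (by simpa using dvd_sub hc1 hc2)
  · -- e > 2k
    have hd2k1 : P^(2*k+1) ∣ d := by
      rw [hde]
      exact dvd_mul_of_dvd_left (pow_dvd_pow _ (by omega)) _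
    rcases eq_or_lt_of_le hb2k' with hbeq | hblt
    · -- b = 2k
      subst hbeq
      rcases eq_or_ne p 2 with hp2 | hp2
      · have hzz : ∀ z : ℤ_[p], P^(2*k+1) ∣ P^k*(2*z) → P^k ∣ z := by
          intro z hdeep
          have hh2 : P^(k+1) ∣ 2*z := by
            refine pow_dvd_cancel (c := k) ?_
            rw [show k+(k+1) = 2*k+1 by omega]
            exact hdeep
          exact two_cancel hh2
        rw [leaf_single2 hp2 h1 hd2k1 (hzz z1 hdeep1),
          leaf_single2 hp2 h2 hd2k1 (hzz z2 hdeep2)]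
      · exfalso
        have hzz1 : P^(k+1) ∣ z1 := by
          have hh1 : P^(k + (k+1)) ∣ P^k*(2*z1) := by
            rw [show k+(k+1) = 2*k+1 by omega]
            exact hdeep1
          exact (isUnit_two_of_ne hp2).dvd_mul_left.mp (pow_dvd_cancel hh1)
        obtain ⟨z2, hz2⟩ := hzz1
        refine h1.2 ?_
        have hform : z1^2 - d = P^(2*k+1)*(P*z2^2) - d := by rw [hz2]; ring
        rw [hform]
        exact dvd_sub (dvd_mul_right _ _) hd2k1
    · -- b ≥ 2k+1 : single leaf
      have hzz : ∀ z : ℤ_[p], P^(b+1) ∣ P^k*(2*z) → P^(k+1) ∣ z := by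
        intro z hdeep
        have hh2 : P^(k+2) ∣ 2*z := by
          refine pow_dvd_cancel (c := k) ?_
          exact dvd_trans (pow_dvd_pow _ (by omega : k+(k+2) ≤ b+1)) hdeep
        exact two_cancel hh2
      rw [leaf_single h1 hd2k1 (by omega) (hzz z1 hdeep1),
        leaf_single h2 hd2k1 (by omega) (hzz z2 hdeep2)]

end PadicAux
namespace PadicAux

variable {p : ℕ} [hp : Fact p.Prime]

local notation "P" => (p : ℤ_[p])

lemma ncard_prod {α β : Type*} (S : Set α) (T : Set β) :
    (S ×ˢ T).ncard = S.ncard * T.ncard := by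
  rw [← Nat.card_coe_set_eq, ← Nat.card_coe_set_eq, ← Nat.card_coe_set_eq,
    Nat.card_congr (Equiv.Set.prod S T), Nat.card_prod]

lemma res_p : res ((p : ℕ) : ℤ_[p]) = 0 := res_eq_zero_iff.mpr dvd_rfl

lemma res_unit_inv {w : ℤ_[p]} (hw : IsUnit w) :
    res ((hw.unit⁻¹ : ℤ_[p]ˣ) : ℤ_[p]) = (res w)⁻¹ := by
  have h1 : res ((hw.unit⁻¹ : ℤ_[p]ˣ) : ℤ_[p]) * res w = 1 := by
    rw [← _root_.map_mul]
    have : ((hw.unit⁻¹ : ℤ_[p]ˣ) : ℤ_[p]) * w = 1 := by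
      nth_rewrite 2 [← hw.unit_spec]
      exact Units.inv_mul _
    rw [this, _root_.map_one]
  exact eq_inv_of_mul_eq_one_left h1

/-- the 2-dimensional lifting set -/
noncomputable def V2 (d π1 π2 : ℤ_[p]) (k b : ℕ) : Set (ZMod p × ZMod p) :=
  {τ | ∃ s t : ℤ_[p], res s = τ.1 ∧ res t = τ.2 ∧
        valEq ((π1 + P ^ k * s)^2 - d * (π2 + P ^ k * t)^2) b}

lemma V2_univ0 {d π1 π2 : ℤ_[p]} {k : ℕ} (hk : 1 ≤ k)
    (hv : valEq (π1^2 - d*π2^2) 0) : V2 d π1 π2 k 0 = Set.univ := by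
  ext τ
  simp only [Set.mem_univ, iff_true]
  refine ⟨lft τ.1, lft τ.2, res_lft _, res_lft _, ?_⟩
  rw [valEq_zero_iff] at hv ⊢
  intro hdvd
  refine hv ?_
  have hcorr : P ∣ ((π1 + P ^ k * lft τ.1)^2 - d * (π2 + P ^ k * lft τ.2)^2)
      - (π1^2 - d*π2^2) := by
    obtain ⟨k1, hk1⟩ : ∃ k1, k = 1 + k1 := ⟨k - 1, by omega⟩
    refine Dvd.intro ?_ ?_
    exact P^k1 * (lft τ.1 * (2*π1) + P^k * (lft τ.1)^2
      - d * (lft τ.2 * (2*π2) + P^k * (lft τ.2)^2))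
    rw [hk1]
    ring
  have := dvd_sub hdvd hcorr
  simpa using this

/-- the row equivalence -/
noncomputable def rowEquiv (x y : ZMod p) (hy : y ≠ 0) :
    (ZMod p × ZMod p) ≃ (ZMod p × ZMod p) where
  toFun τ := ((τ.1 * y - τ.2 * x) * (y*y)⁻¹, τ.2)
  invFun σ := ((σ.1 * (y*y) + σ.2 * x) * y⁻¹, σ.2)
  left_inv τ := by
    apply Prod.ext
    · show ((τ.1 * y - τ.2 * x) * (y*y)⁻¹ * (y*y) + τ.2 * x) * y⁻¹ = τ.1
      field_simp
      ring
    · rfl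
  right_inv σ := by
    apply Prod.ext
    · show ((σ.1 * (y*y) + σ.2 * x) * y⁻¹ * y - σ.2 * x) * (y*y)⁻¹ = σ.1
      field_simp
      ring
    · rfl

lemma V2_ncard {d π1 π2 : ℤ_[p]} {k b : ℕ} (hk : 1 ≤ k) (hu : IsUnit π2) :
    (V2 d π1 π2 k b).ncard
      = (LS d (π1 * ((hu.unit⁻¹ : ℤ_[p]ˣ) : ℤ_[p])) k b).ncard * Fintype.card (ZMod p) := by
  haveI : NeZero p := ⟨hp.out.ne_zero⟩
  have hvπ : ((hu.unit⁻¹ : ℤ_[p]ˣ) : ℤ_[p]) * π2 = 1 := by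
    nth_rewrite 2 [← hu.unit_spec]
    exact Units.inv_mul _
  have hy0 : res π2 ≠ 0 := isUnit_iff_res.mp hu
  have hresv : res ((hu.unit⁻¹ : ℤ_[p]ˣ) : ℤ_[p]) = (res π2)⁻¹ := res_unit_inv hu
  have hresPk : ∀ t : ℤ_[p], res (π2 + P ^ k * t) = res π2 := by
    intro t
    rw [_root_.map_add, _root_.map_mul, _root_.map_pow, res_p,
      zero_pow (by omega : k ≠ 0), zero_mul, add_zero]
  have hYunit : ∀ t : ℤ_[p], IsUnit (π2 + P ^ k * t) := by
    intro t
    rw [isUnit_iff_res, hresPk]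
    exact hy0
  have hmain : V2 d π1 π2 k b = ⇑(rowEquiv (res π1) (res π2) hy0) ⁻¹'
      ((LS d (π1 * ((hu.unit⁻¹ : ℤ_[p]ˣ) : ℤ_[p])) k b) ×ˢ (Set.univ : Set (ZMod p))) := by
    ext τ
    simp only [Set.mem_preimage, Set.mem_prod, Set.mem_univ, and_true, rowEquiv,
      Equiv.coe_fn_mk]
    constructor
    · rintro ⟨s, t, hs, ht, hval⟩
      have hYu : IsUnit (π2 + P ^ k * t) := hYunit t
      have hYiY : ((hYu.unit⁻¹ : ℤ_[p]ˣ) : ℤ_[p]) * (π2 + P ^ k * t) = 1 := by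
        nth_rewrite 2 [← hYu.unit_spec]
        exact Units.inv_mul _
      refine ⟨(s*π2 - t*π1) * ((hYu.unit⁻¹ : ℤ_[p]ˣ) : ℤ_[p])
        * ((hu.unit⁻¹ : ℤ_[p]ˣ) : ℤ_[p]), ?_, ?_⟩
      · have hresYi : res ((hYu.unit⁻¹ : ℤ_[p]ˣ) : ℤ_[p]) = (res (π2 + P ^ k * t))⁻¹ :=
          res_unit_inv hYu
        rw [_root_.map_mul, _root_.map_mul, _root_.map_sub, _root_.map_mul, _root_.map_mul,
          hs, ht, hresYi, hresPk, hresv, mul_inv]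
        ring
      · have hclaim : π1 * ((hu.unit⁻¹ : ℤ_[p]ˣ) : ℤ_[p])
            + P ^ k * ((s*π2 - t*π1) * ((hYu.unit⁻¹ : ℤ_[p]ˣ) : ℤ_[p])
              * ((hu.unit⁻¹ : ℤ_[p]ˣ) : ℤ_[p]))
            = (π1 + P ^ k * s) * ((hYu.unit⁻¹ : ℤ_[p]ˣ) : ℤ_[p]) := by
          have hYπ2 : (π2 + P ^ k * t) * π2 ≠ 0 := ((hYunit t).mul hu).ne_zero
          refine mul_right_cancel₀ hYπ2 ?_
          have e3 : (π1 * ((hu.unit⁻¹ : ℤ_[p]ˣ) : ℤ_[p])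
              + P ^ k * ((s*π2 - t*π1) * ((hYu.unit⁻¹ : ℤ_[p]ˣ) : ℤ_[p])
                * ((hu.unit⁻¹ : ℤ_[p]ˣ) : ℤ_[p]))) * ((π2 + P ^ k * t) * π2)
              = π1 * (π2 + P ^ k * t) * (((hu.unit⁻¹ : ℤ_[p]ˣ) : ℤ_[p]) * π2)
                + P ^ k * (s*π2 - t*π1)
                  * (((hYu.unit⁻¹ : ℤ_[p]ˣ) : ℤ_[p]) * (π2 + P ^ k * t))
                  * (((hu.unit⁻¹ : ℤ_[p]ˣ) : ℤ_[p]) * π2) := by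
            ring
          have e2 : (π1 + P ^ k * s) * ((hYu.unit⁻¹ : ℤ_[p]ˣ) : ℤ_[p])
              * ((π2 + P ^ k * t) * π2)
              = (π1 + P ^ k * s) * π2
                * (((hYu.unit⁻¹ : ℤ_[p]ˣ) : ℤ_[p]) * (π2 + P ^ k * t)) := by
            ring
          rw [e3, e2, hYiY, hvπ]
          ring
        rw [hclaim]
        have hsq : ((π1 + P ^ k * s) * ((hYu.unit⁻¹ : ℤ_[p]ˣ) : ℤ_[p]))^2 - d
            = (((hYu.unit⁻¹ : ℤ_[p]ˣ) : ℤ_[p]))^2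
              * ((π1 + P ^ k * s)^2 - d * (π2 + P ^ k * t)^2) := by
          linear_combination (d * (((hYu.unit⁻¹ : ℤ_[p]ˣ) : ℤ_[p]) * (π2 + P ^ k * t)) + d)
            * hYiY
        rw [hsq]
        exact (valEq_unit_mul ((IsUnit.of_mul_eq_one _ hYiY).pow 2)).mpr hval
    · rintro ⟨u, hres, hval⟩
      have hYu : IsUnit (π2 + P ^ k * lft τ.2) := hYunit _
      refine ⟨π1 * ((hu.unit⁻¹ : ℤ_[p]ˣ) : ℤ_[p]) * lft τ.2 + u * (π2 + P ^ k * lft τ.2),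
        lft τ.2, ?_, res_lft _, ?_⟩
      · rw [_root_.map_add, _root_.map_mul, _root_.map_mul, _root_.map_mul,
          hresPk, hresv, res_lft, hres]
        field_simp
        ring
      · have hX : π1 + P ^ k * (π1 * ((hu.unit⁻¹ : ℤ_[p]ˣ) : ℤ_[p]) * lft τ.2
            + u * (π2 + P ^ k * lft τ.2))
            = (π1 * ((hu.unit⁻¹ : ℤ_[p]ˣ) : ℤ_[p]) + P ^ k * u) * (π2 + P ^ k * lft τ.2) := by
          linear_combination (-π1) * hvπ
        rw [hX]
        have hsq : ((π1 * ((hu.unit⁻¹ : ℤ_[p]ˣ) : ℤ_[p]) + P ^ k * u)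
              * (π2 + P ^ k * lft τ.2))^2 - d * (π2 + P ^ k * lft τ.2)^2
            = (π2 + P ^ k * lft τ.2)^2
              * ((π1 * ((hu.unit⁻¹ : ℤ_[p]ˣ) : ℤ_[p]) + P ^ k * u)^2 - d) := by
          ring
        rw [hsq]
        exact (valEq_unit_mul (hYu.pow 2)).mpr hval
  rw [hmain]
  have hpre : ⇑(rowEquiv (res π1) (res π2) hy0) ⁻¹'
        ((LS d (π1 * ((hu.unit⁻¹ : ℤ_[p]ˣ) : ℤ_[p])) k b) ×ˢ (Set.univ : Set (ZMod p)))
      = ⇑(rowEquiv (res π1) (res π2) hy0).symm ''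
        ((LS d (π1 * ((hu.unit⁻¹ : ℤ_[p]ˣ) : ℤ_[p])) k b) ×ˢ (Set.univ : Set (ZMod p))) := by
    ext σ
    simp only [Set.mem_preimage, Set.mem_image]
    constructor
    · intro h
      exact ⟨_, h, (rowEquiv (res π1) (res π2) hy0).symm_apply_apply σ⟩
    · rintro ⟨w, hw, rfl⟩
      rwa [(rowEquiv (res π1) (res π2) hy0).apply_symm_apply]
  rw [hpre, Set.ncard_image_of_injective _ (rowEquiv (res π1) (res π2) hy0).symm.injective,
    ncard_prod, Set.ncard_univ, Nat.card_eq_fintype_card]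

/-- main 2D comparison -/
lemma main2D {d π1 π2 ρ1 ρ2 : ℤ_[p]} {k b : ℕ} (hd : d ≠ 0) (hk : 1 ≤ k)
    (hpr1 : ¬(P ∣ π1 ∧ P ∣ π2)) (hpr2 : ¬(P ∣ ρ1 ∧ P ∣ ρ2))
    (hv1 : valEq (π1^2 - d*π2^2) b) (hv2 : valEq (ρ1^2 - d*ρ2^2) b) :
    (V2 d π1 π2 k b).ncard = (V2 d ρ1 ρ2 k b).ncard := by
  rcases Nat.eq_zero_or_pos b with rfl | hb
  · rw [V2_univ0 hk hv1, V2_univ0 hk hv2]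
  have hunit : ∀ a1 a2 : ℤ_[p], ¬(P ∣ a1 ∧ P ∣ a2) → valEq (a1^2 - d*a2^2) b → IsUnit a2 := by
    intro a1 a2 hpr hv
    rw [← not_p_dvd_iff_isUnit]
    intro hdvd
    have h1 : P ∣ a1^2 - d*a2^2 := dvd_trans (dvd_pow_self _ (by omega : b ≠ 0)) hv.1
    have h2 : P ∣ a1^2 := by
      have hda : P ∣ d * a2^2 := by
        rw [sq]
        exact (hdvd.mul_left a2).mul_left d
      have := dvd_add h1 hda
      simpa using this
    exact hpr ⟨(PadicInt.prime_p).dvd_of_dvd_pow h2, hdvd⟩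
  have hu2 : IsUnit π2 := hunit _ _ hpr1 hv1
  have hr2 : IsUnit ρ2 := hunit _ _ hpr2 hv2
  rw [V2_ncard hk hu2, V2_ncard hk hr2]
  congr 1
  refine main1D hd hk ?_ ?_
  · set v : ℤ_[p] := ((hu2.unit⁻¹ : ℤ_[p]ˣ) : ℤ_[p]) with hv
    have hvπ : v * π2 = 1 := by
      rw [hv]; nth_rewrite 2 [← hu2.unit_spec]; exact Units.inv_mul _
    have hform : (π1 * v)^2 - d = v^2 * (π1^2 - d*π2^2) := by
      linear_combination (d * (v*π2) + d) * hvπ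
    rw [hform]
    exact (valEq_unit_mul ((IsUnit.of_mul_eq_one _ hvπ).pow 2)).mpr hv1
  · set v : ℤ_[p] := ((hr2.unit⁻¹ : ℤ_[p]ˣ) : ℤ_[p]) with hv
    have hvπ : v * ρ2 = 1 := by
      rw [hv]; nth_rewrite 2 [← hr2.unit_spec]; exact Units.inv_mul _
    have hform : (ρ1 * v)^2 - d = v^2 * (ρ1^2 - d*ρ2^2) := by
      linear_combination (d * (v*ρ2) + d) * hvπ
    rw [hform]
    exact (valEq_unit_mul ((IsUnit.of_mul_eq_one _ hvπ).pow 2)).mpr hv2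

end PadicAux
namespace PadicAux

variable {p : ℕ} [hp : Fact p.Prime]

local notation "P" => (p : ℤ_[p])

lemma toZModPow_eq_iff {n : ℕ} {x y : ℤ_[p]} :
    PadicInt.toZModPow n x = PadicInt.toZModPow n y ↔ P ^ n ∣ x - y := by
  constructor
  · intro h
    have hker : x - y ∈ RingHom.ker (PadicInt.toZModPow (p := p) n) := by
      rw [RingHom.mem_ker, _root_.map_sub, h, sub_self]
    rwa [PadicInt.ker_toZModPow, Ideal.mem_span_singleton] at hker
  · intro h
    have hker : x - y ∈ RingHom.ker (PadicInt.toZModPow (p := p) n) := by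
      rw [PadicInt.ker_toZModPow, Ideal.mem_span_singleton]
      exact h
    rw [RingHom.mem_ker, _root_.map_sub, sub_eq_zero] at hker
    exact hker

lemma res_eq_res_iff_toZModPow {x y : ℤ_[p]} : res x = res y ↔
    PadicInt.toZModPow 1 x = PadicInt.toZModPow 1 y := by
  rw [res_eq_iff, toZModPow_eq_iff, pow_one]

lemma coe_redGL {n : ℕ} (A : GL (Fin 2) ℤ_[p]) :
    ((redGL p n A : GL (Fin 2) (ZMod (p^n))) : Matrix (Fin 2) (Fin 2) (ZMod (p^n)))
      = ((A : Matrix (Fin 2) (Fin 2) ℤ_[p])).map (PadicInt.toZModPow n) :=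
  rfl

lemma redGL_eq_iff {n : ℕ} (A B : GL (Fin 2) ℤ_[p]) :
    redGL p n A = redGL p n B ↔
      ∀ i j, P ^ n ∣ ((A : Matrix (Fin 2) (Fin 2) ℤ_[p]) i j
        - (B : Matrix (Fin 2) (Fin 2) ℤ_[p]) i j) := by
  rw [Units.ext_iff, coe_redGL, coe_redGL, ← Matrix.ext_iff]
  constructor
  · intro h i j
    have := h i j
    rw [Matrix.map_apply, Matrix.map_apply] at this
    exact toZModPow_eq_iff.mp this
  · intro h i j
    rw [Matrix.map_apply, Matrix.map_apply]
    exact toZModPow_eq_iff.mpr (h i j)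

lemma castGL_redGL {n : ℕ} (A : GL (Fin 2) ℤ_[p]) :
    castGL p n (redGL p (n+1) A) = redGL p n A := by
  have h := PadicInt.zmod_cast_comp_toZModPow (p := p) n (n+1) (Nat.le_succ n)
  show Matrix.GeneralLinearGroup.map _ (Matrix.GeneralLinearGroup.map _ A) = _
  rw [← Matrix.GeneralLinearGroup.map_comp_apply, ← Matrix.GeneralLinearGroup.map_comp, h]
  rfl

lemma redGL_one_of {n : ℕ} (A : GL (Fin 2) ℤ_[p])
    (h : ∀ i j, P ^ n ∣ ((A : Matrix (Fin 2) (Fin 2) ℤ_[p]) - 1) i j) :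
    redGL p n A = 1 := by
  rw [show (1 : GL (Fin 2) (ZMod (p^n))) = redGL p n 1 from (_root_.map_one (redGL p n)).symm,
    redGL_eq_iff]
  intro i j
  have := h i j
  rwa [Matrix.sub_apply] at this

lemma matsub1 {R : Type*} [CommRing R] (x y z w : R) :
    (!![x, y; z, w] : Matrix (Fin 2) (Fin 2) R) - 1 = !![x - 1, y; z, w - 1] := by
  rw [Matrix.one_fin_two]
  ext i j
  fin_cases i <;> fin_cases j <;> simp

lemma fin2_sub {R : Type*} [CommRing R] (a b c d e f g h : R) :
    (!![a, b; c, d] : Matrix (Fin 2) (Fin 2) R) - !![e, f; g, h]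
      = !![a-e, b-f; c-g, d-h] := by
  ext i j
  fin_cases i <;> fin_cases j <;> simp

lemma fin2_dvd {R : Type*} [CommRing R] {q a b c d : R}
    (ha : q ∣ a) (hb : q ∣ b) (hc : q ∣ c) (hd : q ∣ d) :
    ∀ i j, q ∣ (!![a, b; c, d] : Matrix (Fin 2) (Fin 2) R) i j := by
  intro i j
  fin_cases i <;> fin_cases j <;> simp <;> assumption

lemma fin2_e00 {R : Type*} [CommRing R] (a b c d : R) :
    (!![a, b; c, d] : Matrix (Fin 2) (Fin 2) R) 0 0 = a := by simp

lemma fin2_e10 {R : Type*} [CommRing R] (a b c d : R) :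
    (!![a, b; c, d] : Matrix (Fin 2) (Fin 2) R) 1 0 = c := by simp

lemma fin2_eq_of {R : Type*} [CommRing R] {a b c d e f g h : R}
    (h1 : a = e) (h2 : b = f) (h3 : c = g) (h4 : d = h) :
    (!![a, b; c, d] : Matrix (Fin 2) (Fin 2) R) = !![e, f; g, h] := by
  rw [h1, h2, h3, h4]

lemma modI_cartan {a : ℕ} {x y d : ℤ_[p]} (N : GL (Fin 2) ℤ_[p])
    (hmat : (N : Matrix (Fin 2) (Fin 2) ℤ_[p]) = !![x, d*y; y, x]) :
    modI a N ↔ (P ^ a ∣ x - 1 ∧ P ^ a ∣ y) := by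
  unfold modI
  rw [hmat, matsub1]
  constructor
  · intro h
    constructor
    · have := h 0 0
      simpa using this
    · have := h 1 0
      simpa using this
  · rintro ⟨h1, h2⟩ i j
    fin_cases i <;> fin_cases j <;> simp
    exacts [h1, Dvd.dvd.mul_left h2 d, h2, h1]

lemma det_cartan_sub_one {x y d : ℤ_[p]} (N : GL (Fin 2) ℤ_[p])
    (hmat : (N : Matrix (Fin 2) (Fin 2) ℤ_[p]) = !![x, d*y; y, x]) :
    ((N : Matrix (Fin 2) (Fin 2) ℤ_[p]) - 1).det = (x-1)^2 - d*y^2 := by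
  rw [hmat, matsub1, Matrix.det_fin_two_of]
  ring

end PadicAux
namespace PadicAux

variable {p : ℕ} [hp : Fact p.Prime]

local notation "P" => (p : ℤ_[p])

lemma cond_data {d : ℤ_[p]} {a b : ℕ} {x0 y0 π1 π2 : ℤ_[p]} (N : GL (Fin 2) ℤ_[p])
    (hmat : (N : Matrix (Fin 2) (Fin 2) ℤ_[p]) = !![x0, d*y0; y0, x0])
    (hE : CondE a b N) (hπ1 : x0 - 1 = P ^ a * π1) (hπ2 : y0 = P ^ a * π2) :
    (¬ (P ∣ π1 ∧ P ∣ π2)) ∧ valEq (π1^2 - d*π2^2) b := by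
  obtain ⟨hmoda, hmoda1, hdet⟩ := hE
  constructor
  · rintro ⟨⟨c1, hc1⟩, ⟨c2, hc2⟩⟩
    refine hmoda1 ((modI_cartan N hmat).mpr ⟨?_, ?_⟩)
    · rw [hπ1, hc1, pow_succ]
      exact ⟨c1, by ring⟩
    · rw [hπ2, hc2, pow_succ]
      exact ⟨c2, by ring⟩
  · have hform : ((N : Matrix (Fin 2) (Fin 2) ℤ_[p]) - 1).det
        = P^(2*a) * (π1^2 - d*π2^2) := by
      rw [det_cartan_sub_one N hmat, hπ1, hπ2]
      ring
    rw [hform] at hdet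
    exact (valEq_pow_shift (c := 2*a) (b := b)).mp hdet

set_option maxHeartbeats 1000000 in
lemma fiber_card {d : ℤ_[p]} (C : Subgroup (GL (Fin 2) ℤ_[p])) (hC : IsCartan 0 d C)
    (G : Subgroup (GL (Fin 2) ℤ_[p])) (hGC : G ≤ C)
    (n₀ : ℕ) (hG : ∀ M ∈ C, modI n₀ M → M ∈ G)
    {a b k n : ℕ} (hn : n₀ ≤ n) (hnak : n = a + k) (hk : 1 ≤ k)
    (N : GL (Fin 2) ℤ_[p]) (hNG : N ∈ G) (hNE : CondE a b N)
    {x0 y0 π1 π2 : ℤ_[p]}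
    (hmat : (N : Matrix (Fin 2) (Fin 2) ℤ_[p]) = !![x0, d*y0; y0, x0])
    (hπ1 : x0 - 1 = P ^ a * π1) (hπ2 : y0 = P ^ a * π2) :
    {M' : GL (Fin 2) (ZMod (p ^ (n + 1))) |
        M' ∈ redGL p (n + 1) '' Mset G a b ∧ castGL p n M' = redGL p n N}.ncard
      = (V2 d π1 π2 k b).ncard := by
  obtain ⟨hprim, hvπ⟩ := cond_data N hmat hNE hπ1 hπ2
  have hNC : N ∈ C := hGC hNG
  -- determinant facts
  have hdetN : IsUnit ((N : Matrix (Fin 2) (Fin 2) ℤ_[p]).det) :=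
    (Matrix.isUnit_iff_isUnit_det _).mp N.isUnit
  have hdetN' : res (x0*x0 - d*y0*y0) ≠ 0 := by
    rw [hmat, Matrix.det_fin_two_of] at hdetN
    have h := isUnit_iff_res.mp hdetN
    convert h using 2 <;> ring
  have hdet : ∀ r s : ℤ_[p],
      IsUnit ((!![x0 + P^n*r, d*(y0 + P^n*s); y0 + P^n*s, x0 + P^n*r]
        : Matrix (Fin 2) (Fin 2) ℤ_[p]).det) := by
    intro r s
    rw [Matrix.det_fin_two_of, isUnit_iff_res]
    have h1 : res ((x0 + P^n*r) * (x0 + P^n*r) - d*(y0 + P^n*s) * (y0 + P^n*s))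
        = res (x0*x0 - d*y0*y0) := by
      rw [res_eq_iff]
      have hPn : P ∣ P^n := dvd_pow_self _ (by omega : n ≠ 0)
      exact dvd_trans hPn
        ⟨2*x0*r + P^n*r^2 - d*(2*y0*s) - d*(P^n*s^2), by ring⟩
    rw [h1]
    exact hdetN'
  set NU : ℤ_[p] → ℤ_[p] → GL (Fin 2) ℤ_[p] :=
    fun r s => ((Matrix.isUnit_iff_isUnit_det _).mpr (hdet r s)).unit with hNUdef
  have hNU : ∀ r s : ℤ_[p], (NU r s : Matrix (Fin 2) (Fin 2) ℤ_[p])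
      = !![x0 + P^n*r, d*(y0 + P^n*s); y0 + P^n*s, x0 + P^n*r] :=
    fun r s => IsUnit.unit_spec _
  -- coordinate identities
  have hXa : ∀ r : ℤ_[p], x0 + P^n*r - 1 = P^a * (π1 + P^k*r) := by
    intro r
    rw [hnak, pow_add]
    linear_combination hπ1
  have hYa : ∀ s : ℤ_[p], y0 + P^n*s = P^a * (π2 + P^k*s) := by
    intro s
    rw [hnak, pow_add]
    linear_combination hπ2
  -- entrywise difference between NU r s and N
  have hdiff : ∀ r s : ℤ_[p], ∀ i j, P^n ∣
      ((NU r s : Matrix (Fin 2) (Fin 2) ℤ_[p]) i j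
        - (N : Matrix (Fin 2) (Fin 2) ℤ_[p]) i j) := by
    intro r s i j
    rw [← Matrix.sub_apply, hNU, hmat, fin2_sub]
    exact fin2_dvd ⟨r, by ring⟩ ⟨d*s, by ring⟩ ⟨s, by ring⟩ ⟨r, by ring⟩ i j
  have hredn : ∀ r s : ℤ_[p], redGL p n (NU r s) = redGL p n N := by
    intro r s
    exact (redGL_eq_iff _ _).mpr (hdiff r s)
  -- membership in Mset
  have hmem : ∀ r s : ℤ_[p], valEq ((π1 + P^k*r)^2 - d*(π2 + P^k*s)^2) b →
      NU r s ∈ Mset G a b := by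
    intro r s hval
    have hNUC : NU r s ∈ C := by
      have hset : (NU r s : GL (Fin 2) ℤ_[p]) ∈ (C : Set (GL (Fin 2) ℤ_[p])) := by
        rw [hC]
        refine ⟨x0 + P^n*r, y0 + P^n*s, ?_⟩
        rw [hNU]
        exact fin2_eq_of rfl rfl rfl (by ring)
      exact hset
    have hNUG : NU r s ∈ G := by
      have hwC : N⁻¹ * NU r s ∈ C := mul_mem (inv_mem hNC) hNUC
      have hinvN : ((N⁻¹ : GL (Fin 2) ℤ_[p]) : Matrix (Fin 2) (Fin 2) ℤ_[p])
          * (N : Matrix (Fin 2) (Fin 2) ℤ_[p]) = 1 := by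
        exact N.inv_mul
      have hw1 : ((N⁻¹ * NU r s : GL (Fin 2) ℤ_[p]) : Matrix (Fin 2) (Fin 2) ℤ_[p]) - 1
          = ((N⁻¹ : GL (Fin 2) ℤ_[p]) : Matrix (Fin 2) (Fin 2) ℤ_[p])
            * ((NU r s : Matrix (Fin 2) (Fin 2) ℤ_[p])
              - (N : Matrix (Fin 2) (Fin 2) ℤ_[p])) := by
        rw [Units.val_mul, Matrix.mul_sub, hinvN]
      have hmodw : modI n₀ (N⁻¹ * NU r s) := by
        intro i j
        rw [hw1, Matrix.mul_apply]
        refine Finset.dvd_sum ?_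
        intro l _
        refine dvd_trans (pow_dvd_pow _ hn) ?_
        rw [Matrix.sub_apply]
        exact Dvd.dvd.mul_left (hdiff r s l j) _
      have hwG : N⁻¹ * NU r s ∈ G := hG _ hwC hmodw
      rw [← mul_inv_cancel_left N (NU r s)]
      exact mul_mem hNG hwG
    refine ⟨hNUG, ?_, ?_, ?_⟩
    · refine (modI_cartan (NU r s) (hNU r s)).mpr ⟨?_, ?_⟩
      · exact ⟨π1 + P^k*r, hXa r⟩
      · exact ⟨π2 + P^k*s, hYa s⟩
    · intro hcon
      obtain ⟨hd1, hd2⟩ := (modI_cartan (NU r s) (hNU r s)).mp hcon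
      rw [hXa r] at hd1
      rw [hYa s] at hd2
      refine hprim ⟨?_, ?_⟩
      · have h1 : P ∣ π1 + P^k*r := by
          have := pow_dvd_cancel (c := a) (a := 1) hd1
          simpa using this
        have h2 : P ∣ P^k*r := (dvd_pow_self _ (by omega : k ≠ 0)).mul_right r
        have := dvd_sub h1 h2
        simpa using this
      · have h1 : P ∣ π2 + P^k*s := by
          have := pow_dvd_cancel (c := a) (a := 1) hd2
          simpa using this
        have h2 : P ∣ P^k*s := (dvd_pow_self _ (by omega : k ≠ 0)).mul_right s
        have := dvd_sub h1 h2
        simpa using this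
    · have hform : ((NU r s : Matrix (Fin 2) (Fin 2) ℤ_[p]) - 1).det
          = P^(2*a) * ((π1 + P^k*r)^2 - d*(π2 + P^k*s)^2) := by
        rw [det_cartan_sub_one (NU r s) (hNU r s), hXa r, hYa s]
        ring
      rw [hform]
      exact (valEq_pow_shift (c := 2*a) (b := b)).mpr hval
  -- congruence of reductions mod p^{n+1}
  have hcong : ∀ r s r' s' : ℤ_[p], res r = res r' → res s = res s' →
      redGL p (n+1) (NU r s) = redGL p (n+1) (NU r' s') := by
    intro r s r' s' hr hs
    refine (redGL_eq_iff _ _).mpr ?_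
    intro i j
    have hdr : P ^ (n+1) ∣ P^n * (r - r') := by
      rw [pow_succ]
      exact mul_dvd_mul_left _ (res_eq_iff.mp hr)
    have hds : P ^ (n+1) ∣ P^n * (s - s') := by
      rw [pow_succ]
      exact mul_dvd_mul_left _ (res_eq_iff.mp hs)
    rw [← Matrix.sub_apply, hNU, hNU, fin2_sub]
    refine fin2_dvd ?_ ?_ ?_ ?_ i j
    · have he : x0 + P^n*r - (x0 + P^n*r') = P^n * (r - r') := by ring
      rw [he]
      exact hdr
    · have he : d*(y0 + P^n*s) - d*(y0 + P^n*s') = d * (P^n * (s - s')) := by ring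
      rw [he]
      exact hds.mul_left d
    · have he : y0 + P^n*s - (y0 + P^n*s') = P^n * (s - s') := by ring
      rw [he]
      exact hds
    · have he : x0 + P^n*r - (x0 + P^n*r') = P^n * (r - r') := by ring
      rw [he]
      exact hdr
  -- the parametrization
  have himg : {M' : GL (Fin 2) (ZMod (p ^ (n + 1))) |
        M' ∈ redGL p (n + 1) '' Mset G a b ∧ castGL p n M' = redGL p n N}
      = (fun τ : ZMod p × ZMod p => redGL p (n+1) (NU (lft τ.1) (lft τ.2)))
        '' (V2 d π1 π2 k b) := by
    ext M'
    simp only [Set.mem_setOf_eq, Set.mem_image]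
    constructor
    · rintro ⟨⟨N', hN'mem, rfl⟩, hcast⟩
      obtain ⟨hN'G, hN'E⟩ := hN'mem
      have hN'C : (N' : GL (Fin 2) ℤ_[p]) ∈ (C : Set (GL (Fin 2) ℤ_[p])) := hGC hN'G
      rw [hC] at hN'C
      obtain ⟨x', y', hmat'⟩ := hN'C
      have hx'fix : x' + 0*y' = x' := by ring
      rw [hx'fix] at hmat'
      have hredN' : redGL p n N' = redGL p n N := by
        rw [← castGL_redGL N']
        exact hcast
      have hxx := (redGL_eq_iff N' N).mp hredN' 0 0
      have hyy := (redGL_eq_iff N' N).mp hredN' 1 0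
      rw [hmat', hmat, fin2_e00, fin2_e00] at hxx
      rw [hmat', hmat, fin2_e10, fin2_e10] at hyy
      obtain ⟨r', hr'⟩ := hxx
      obtain ⟨s', hs'⟩ := hyy
      have hx'eq : x' = x0 + P^n*r' := by linear_combination hr'
      have hy'eq : y' = y0 + P^n*s' := by linear_combination hs'
      have hvalN' : valEq ((π1 + P^k*r')^2 - d*(π2 + P^k*s')^2) b := by
        have hdet' := hN'E.2.2
        have hform : ((N' : Matrix (Fin 2) (Fin 2) ℤ_[p]) - 1).det
            = P^(2*a) * ((π1 + P^k*r')^2 - d*(π2 + P^k*s')^2) := by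
          rw [det_cartan_sub_one N' hmat', hx'eq, hy'eq, hXa r', hYa s']
          ring
        rw [hform] at hdet'
        exact (valEq_pow_shift (c := 2*a) (b := b)).mp hdet'
      refine ⟨(res r', res s'), ⟨r', s', rfl, rfl, hvalN'⟩, ?_⟩
      have hNUN' : redGL p (n+1) (NU r' s') = redGL p (n+1) N' := by
        refine (redGL_eq_iff _ _).mpr ?_
        intro i j
        rw [← Matrix.sub_apply, hNU, hmat', hx'eq, hy'eq, fin2_sub]
        exact fin2_dvd ⟨0, by ring⟩ ⟨0, by ring⟩ ⟨0, by ring⟩ ⟨0, by ring⟩ i j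
      rw [← hNUN']
      exact hcong _ _ _ _ (by rw [res_lft]) (by rw [res_lft])
    · rintro ⟨τ, ⟨r', s', hr, hs, hval⟩, rfl⟩
      constructor
      · refine ⟨NU r' s', hmem r' s' hval, ?_⟩
        exact hcong _ _ _ _ (by rw [hr, res_lft]) (by rw [hs, res_lft])
      · rw [castGL_redGL]
        exact hredn _ _
  rw [himg]
  refine Set.ncard_image_of_injective _ ?_
  intro τ σ hτσ
  have hent := (redGL_eq_iff _ _).mp hτσ
  have h00 := hent 0 0
  have h10 := hent 1 0
  rw [hNU, hNU, fin2_e00, fin2_e00] at h00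
  rw [hNU, hNU, fin2_e10, fin2_e10] at h10
  have hr : P ∣ lft τ.1 - lft σ.1 := by
    have hd1 : P^(n+1) ∣ P^n * (lft τ.1 - lft σ.1) := by
      have : x0 + P^n * lft τ.1 - (x0 + P^n * lft σ.1) = P^n * (lft τ.1 - lft σ.1) := by
        ring
      rw [← this]
      exact h00
    have := pow_dvd_cancel (c := n) (a := 1) hd1
    simpa using this
  have hs : P ∣ lft τ.2 - lft σ.2 := by
    have hd1 : P^(n+1) ∣ P^n * (lft τ.2 - lft σ.2) := by
      have : y0 + P^n * lft τ.2 - (y0 + P^n * lft σ.2) = P^n * (lft τ.2 - lft σ.2) := by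
        ring
      rw [← this]
      exact h10
    have := pow_dvd_cancel (c := n) (a := 1) hd1
    simpa using this
  have h1 : τ.1 = σ.1 := by
    have := res_eq_iff.mpr hr
    rwa [res_lft, res_lft] at this
  have h2 : τ.2 = σ.2 := by
    have := res_eq_iff.mpr hs
    rwa [res_lft, res_lft] at this
  exact Prod.ext h1 h2

end PadicAux
/-- for an open subgroup `G` of a ramified Cartan subgroup `C(0,d)`, the
number of lifts from `𝓜_{a,b}(G)(n)` to `𝓜_{a,b}(G)(n+1)` is independent of the matrix. -/
theorem Mset_ramified_Cartan_lift_count_independent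
    (p : ℕ) [Fact p.Prime] (d : ℤ_[p]) (hd : d ≠ 0) (hram : Odd p → (p : ℤ_[p]) ∣ d)
    (C : Subgroup (GL (Fin 2) ℤ_[p])) (hC : IsCartan 0 d C)
    (G : Subgroup (GL (Fin 2) ℤ_[p])) (hGC : G ≤ C)
    (n₀ : ℕ) (hn₀ : 1 ≤ n₀) (hG : ∀ M ∈ C, modI n₀ M → M ∈ G)
    (a b n : ℕ) (hn : n₀ ≤ n)
    (M₁ M₂ : GL (Fin 2) (ZMod (p ^ n)))
    (h₁ : M₁ ∈ redGL p n '' Mset G a b) (h₂ : M₂ ∈ redGL p n '' Mset G a b) :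
    {M' : GL (Fin 2) (ZMod (p ^ (n + 1))) |
        M' ∈ redGL p (n + 1) '' Mset G a b ∧ castGL p n M' = M₁}.ncard =
    {M' : GL (Fin 2) (ZMod (p ^ (n + 1))) |
        M' ∈ redGL p (n + 1) '' Mset G a b ∧ castGL p n M' = M₂}.ncard := by
  obtain ⟨N₁, hN₁mem, hN₁red⟩ := h₁
  obtain ⟨N₂, hN₂mem, hN₂red⟩ := h₂
  by_cases hna : n ≤ a
  · have hM : ∀ (N : GL (Fin 2) ℤ_[p]), N ∈ Mset G a b → redGL p n N = 1 := by
      intro N hN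
      refine PadicAux.redGL_one_of N ?_
      intro i j
      exact dvd_trans (pow_dvd_pow _ hna) (hN.2.1 i j)
    have hM12 : M₁ = M₂ := by
      rw [← hN₁red, ← hN₂red, hM _ hN₁mem, hM _ hN₂mem]
    rw [hM12]
  · push_neg at hna
    have hnak : n = a + (n - a) := by omega
    have hk : 1 ≤ n - a := by omega
    have hdata : ∀ (N : GL (Fin 2) ℤ_[p]), N ∈ Mset G a b →
        ∃ x0 y0 π1 π2 : ℤ_[p],
          (N : Matrix (Fin 2) (Fin 2) ℤ_[p]) = !![x0, d*y0; y0, x0]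
          ∧ x0 - 1 = (p:ℤ_[p])^a * π1 ∧ y0 = (p:ℤ_[p])^a * π2 := by
      intro N hN
      have hNC : (N : GL (Fin 2) ℤ_[p]) ∈ (C : Set (GL (Fin 2) ℤ_[p])) := hGC hN.1
      rw [hC] at hNC
      obtain ⟨x0, y0, hmat⟩ := hNC
      have hfix : x0 + 0*y0 = x0 := by ring
      rw [hfix] at hmat
      obtain ⟨hx, hy⟩ := (PadicAux.modI_cartan N hmat).mp hN.2.1
      obtain ⟨π1, hπ1⟩ := hx
      obtain ⟨π2, hπ2⟩ := hy
      exact ⟨x0, y0, π1, π2, hmat, hπ1, hπ2⟩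
    obtain ⟨x1, y1, π1, π2, hmat1, hπ11, hπ12⟩ := hdata N₁ hN₁mem
    obtain ⟨x2, y2, ρ1, ρ2, hmat2, hπ21, hπ22⟩ := hdata N₂ hN₂mem
    rw [← hN₁red, ← hN₂red]
    rw [PadicAux.fiber_card C hC G hGC n₀ hG hn hnak hk N₁ hN₁mem.1 hN₁mem.2 hmat1 hπ11 hπ12,
      PadicAux.fiber_card C hC G hGC n₀ hG hn hnak hk N₂ hN₂mem.1 hN₂mem.2 hmat2 hπ21 hπ22]
    obtain ⟨hprim1, hv1⟩ := PadicAux.cond_data N₁ hmat1 hN₁mem.2 hπ11 hπ12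
    obtain ⟨hprim2, hv2⟩ := PadicAux.cond_data N₂ hmat2 hN₂mem.2 hπ21 hπ22
    exact PadicAux.main2D hd hk hprim1 hprim2 hv1 hv2
end
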